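/- arXiv:2305.07098 — 4 statements merged into one kernel-verified Lean document; each statement's English description precedes it below -/
import Mathlib

section
/- Let n ≥ 1 and let w ∈ ℤ with w < −1. Let x', x ∈ {0,1}^n satisfy x'_1 = 0, x_1 = 1, x ≠ 1^n, and |x_{[2..n]}| ≥ w + n. Then for every y ∈ {0,1}^n one has f_w(x,y) < f_w(x',x). Consequently the state (x',x) is absorbing for the time-linkage (1+1) EA on f_w (its transition kernel at (x',x) is the Dirac measure at (x',x)), so started from (x',x) the (1+1) EA never reaches the global optimum. -/
open scoped Classical BigOperators ENNReal

noncomputable section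

/-- Bitstrings of length `n`. -/
abbrev BitStr (n : ℕ) := Fin n → Bool

/-- The number of one-bits of a bitstring. -/
def ones {n : ℕ} (x : BitStr n) : ℕ := (Finset.univ.filter fun i => x i = true).card

/-- The number of zero-bits of a bitstring. -/
def zeros {n : ℕ} (x : BitStr n) : ℕ := (Finset.univ.filter fun i => x i = false).card

/-- The first bit of a bitstring (`false` if `n = 0`). -/
def firstBit {n : ℕ} (x : BitStr n) : Bool := if h : 0 < n then x ⟨0, h⟩ else false

/-- The number of one-bits among the last `n-1` positions. -/
def onesTail {n : ℕ} (x : BitStr n) : ℕ :=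
  (Finset.univ.filter fun i : Fin n => x i = true ∧ (i : ℕ) ≠ 0).card

/-- The all-ones bitstring `1^n`. -/
def allOnes (n : ℕ) : BitStr n := fun _ => true

/-- The time-linkage OneMax function `f_w(x, y) = |y| + w·x₁`, where `x` is the
previous solution and `y` is the current one. -/
def fW {n : ℕ} (w : ℤ) (x y : BitStr n) : ℤ :=
  (ones y : ℤ) + (if firstBit x then w else 0)

/-- States of the time-linkage algorithms: (previous solution, current solution). -/
abbrev TLState (n : ℕ) := BitStr n × BitStr n

/-- Hamming distance between two bitstrings. -/
def hamming {n : ℕ} (x y : BitStr n) : ℕ := (Finset.univ.filter fun i => x i ≠ y i).card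

/-- Standard bit-wise mutation, flipping each bit independently with probability `1/n`:
`mutEA x y` is the probability that mutating `x` yields `y`. -/
def mutEA {n : ℕ} (x y : BitStr n) : ℝ :=
  (1 / n : ℝ) ^ hamming x y * (1 - 1 / n) ^ (n - hamming x y)

/-- RLS mutation, flipping exactly one bit chosen uniformly at random:
`mutRLS x y` is the probability that mutating `x` yields `y`. -/
def mutRLS {n : ℕ} (x y : BitStr n) : ℝ :=
  if hamming x y = 1 then (1 / n : ℝ) else 0

/-- Transition matrix of the time-linkage (1+1)-type algorithm with mutation
distribution `m` on `f_w`: at state `(x', x)`, an offspring `y` sampled from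
`m x ·` is accepted (the state moving to `(x, y)`) iff `f_w(x, y) ≥ f_w(x', x)`;
otherwise the state stays at `(x', x)`. -/
def tlTrans {n : ℕ} (m : BitStr n → BitStr n → ℝ) (w : ℤ) (s t : TLState n) : ℝ :=
  (∑ y : BitStr n, if fW w s.1 s.2 ≤ fW w s.2 y ∧ t = (s.2, y) then m s.2 y else 0) +
    if t = s then ∑ y : BitStr n, if ¬ fW w s.1 s.2 ≤ fW w s.2 y then m s.2 y else 0 else 0

/-- Transition matrix of the time-linkage (1+1) EA on `f_w`. -/
def transEA {n : ℕ} (w : ℤ) : TLState n → TLState n → ℝ := tlTrans mutEA w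

/-- Transition matrix of the time-linkage RLS on `f_w`. -/
def transRLS {n : ℕ} (w : ℤ) : TLState n → TLState n → ℝ := tlTrans mutRLS w

/-- Probability that the chain with transition matrix `P` started at `s`
visits a state in `E` within the first `T` steps (including time 0). -/
def hitWithin {n : ℕ} (P : TLState n → TLState n → ℝ) (E : TLState n → Prop) :
    ℕ → TLState n → ℝ
  | 0, s => if E s then 1 else 0
  | T + 1, s => if E s then 1 else ∑ t : TLState n, P s t * hitWithin P E T t

/-- Probability that the chain started at `s` ever visits a state in `E`. -/
def hitProb {n : ℕ} (P : TLState n → TLState n → ℝ) (E : TLState n → Prop)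
    (s : TLState n) : ℝ := ⨆ T : ℕ, hitWithin P E T s

/-- Probability that the chain started at `s` visits a state in `E` at some
time `≥ 1` (i.e. at a strictly later time). -/
def hitProbLater {n : ℕ} (P : TLState n → TLState n → ℝ) (E : TLState n → Prop)
    (s : TLState n) : ℝ := ⨆ T : ℕ, ∑ t : TLState n, P s t * hitWithin P E T t

/-- Probability that the chain started at `s` visits `A` within `T` steps
without having visited `B` strictly before (`A` has priority on common states). -/
def raceWithin {n : ℕ} (P : TLState n → TLState n → ℝ) (A B : TLState n → Prop) :
    ℕ → TLState n → ℝ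
  | 0, s => if A s then 1 else 0
  | T + 1, s =>
      if A s then 1 else if B s then 0 else ∑ t : TLState n, P s t * raceWithin P A B T t

/-- Probability that the chain started at `s` eventually visits `A` before `B`,
i.e. reaches `A` without having visited `B` strictly before. -/
def raceProb {n : ℕ} (P : TLState n → TLState n → ℝ) (A B : TLState n → Prop)
    (s : TLState n) : ℝ := ⨆ T : ℕ, raceWithin P A B T s

/-- Probability that the chain started at `s` enters the set `A` within `T`
steps and at the first entrance time is in `E`. -/
def firstHitInWithin {n : ℕ} (P : TLState n → TLState n → ℝ) (A E : TLState n → Prop) :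
    ℕ → TLState n → ℝ
  | 0, s => if A s then (if E s then 1 else 0) else 0
  | T + 1, s =>
      if A s then (if E s then 1 else 0)
      else ∑ t : TLState n, P s t * firstHitInWithin P A E T t

/-- Probability that the chain started at `s` eventually enters the set `A`
and at the first entrance time is in `E`. -/
def firstHitInProb {n : ℕ} (P : TLState n → TLState n → ℝ) (A E : TLState n → Prop)
    (s : TLState n) : ℝ := ⨆ T : ℕ, firstHitInWithin P A E T s

/-- Expected hitting time of `E` for the chain started at `s` (in `ℝ≥0∞`),
via `E[τ] = ∑_{T ≥ 0} P[τ > T]`. -/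
def expHitTime {n : ℕ} (P : TLState n → TLState n → ℝ) (E : TLState n → Prop)
    (s : TLState n) : ℝ≥0∞ := ∑' T : ℕ, ENNReal.ofReal (1 - hitWithin P E T s)

/-- Probability that the chain started at `s` never visits a state in `B`. -/
def avoidProb {n : ℕ} (P : TLState n → TLState n → ℝ) (B : TLState n → Prop)
    (s : TLState n) : ℝ := 1 - hitProb P B s

/-- `E[τ_E · 1_{B is never visited}]` for the chain started at `s` (in `ℝ≥0∞`),
using `P[τ_E > T and B never visited] = P[B never visited] − P[E hit within T
steps, avoiding B]`, which is valid whenever `B` cannot be visited anymore once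
`E` has been reached. -/
def expHitTimeAvoid {n : ℕ} (P : TLState n → TLState n → ℝ) (E B : TLState n → Prop)
    (s : TLState n) : ℝ≥0∞ :=
  ∑' T : ℕ, ENNReal.ofReal (avoidProb P B s - raceWithin P E B T s)

/-- The global optimum for negative weight `w < 0`: the current solution is
`1^n` and the stored previous first bit is `0`. -/
def OptNeg {n : ℕ} (s : TLState n) : Prop := s.2 = allOnes n ∧ firstBit s.1 = false

/-- The global optimum for positive weight `w > 0`: the current solution is
`1^n` and the stored previous first bit is `1`. -/
def OptPos {n : ℕ} (s : TLState n) : Prop := s.2 = allOnes n ∧ firstBit s.1 = true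

/-- Event I for the (1+1) EA (for `w < -1`): first bit pattern `(0,1)`,
current solution not `1^n`, and `|x_{[2..n]}| ≥ w + n`. -/
def EventIEA {n : ℕ} (w : ℤ) (s : TLState n) : Prop :=
  firstBit s.1 = false ∧ firstBit s.2 = true ∧ s.2 ≠ allOnes n ∧
    w + n ≤ (onesTail s.2 : ℤ)

/-- Event I for the RLS (for `w < -1`): first bit pattern `(0,1)` and the
current solution is not `1^n`. -/
def EventIRLS {n : ℕ} (s : TLState n) : Prop :=
  firstBit s.1 = false ∧ firstBit s.2 = true ∧ s.2 ≠ allOnes n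

/-- Event II: the current solution is `1^n` and the stored first bit is `1`. -/
def EventII {n : ℕ} (s : TLState n) : Prop :=
  firstBit s.1 = true ∧ s.2 = allOnes n

/-- Event III for the (1+1) EA (for `w > 0`): first bit pattern `(1,0)` and
`|x_{[2..n]}| ≥ n - w + 1`. -/
def EventIIIEA {n : ℕ} (w : ℤ) (s : TLState n) : Prop :=
  firstBit s.1 = true ∧ firstBit s.2 = false ∧ (n : ℤ) - w + 1 ≤ (onesTail s.2 : ℤ)

/-- Event III for the RLS (for `w > 1`): first bit pattern `(1,0)`. -/
def EventIIIRLS {n : ℕ} (s : TLState n) : Prop :=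
  firstBit s.1 = true ∧ firstBit s.2 = false

/-- Euler's number `e`. -/
def eu : ℝ := Real.exp 1

end

lemma ones_le {n : ℕ} (y : BitStr n) : ones y ≤ n := by
  classical
  calc ones y ≤ Finset.univ.card := Finset.card_filter_le _ _
  _ = n := by simp

lemma prod_if_eq {n : ℕ} (p q : ℝ) (z : BitStr n) :
    (∏ i : Fin n, (if z i then p else q)) = p ^ ones z * q ^ (n - ones z) := by
  classical
  rw [← Finset.prod_filter_mul_prod_filter_not Finset.univ (fun i => z i = true)]
  have h1 : (∏ i ∈ Finset.univ.filter fun i => z i = true, (if z i then p else q))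
      = p ^ ones z := by
    rw [Finset.prod_congr rfl (fun i hi => ?_), Finset.prod_const, ones]
    simp at hi; simp [hi]
  have h2 : (∏ i ∈ Finset.univ.filter fun i => ¬ z i = true, (if z i then p else q))
      = q ^ (n - ones z) := by
    rw [Finset.prod_congr rfl (fun i hi => ?_), Finset.prod_const]
    · congr 1
      have h := Finset.card_filter_add_card_filter_not
        (s := (Finset.univ : Finset (Fin n))) (p := fun i => z i = true)
      simp only [Finset.card_univ, Fintype.card_fin] at h
      have hones : ones z = (Finset.univ.filter fun i => z i = true).card := rfl
      omega
    · simp at hi; simp [hi]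
  rw [h1, h2]

lemma sum_mutEA {n : ℕ} (hn : 1 ≤ n) (x : BitStr n) :
    ∑ y : BitStr n, mutEA x y = 1 := by
  classical
  set f : BitStr n → BitStr n := fun z i => xor (x i) (z i) with hf
  have hinv : Function.Involutive f := by
    intro z
    funext i
    show xor (x i) (xor (x i) (z i)) = z i
    cases x i <;> cases z i <;> rfl
  rw [← Fintype.sum_bijective f hinv.bijective _ _ (fun z => rfl)]
  have ham : ∀ z : BitStr n, hamming x (f z) = ones z := by
    intro z
    unfold hamming ones
    congr 1
    apply Finset.filter_congr
    intro i _
    show (x i ≠ xor (x i) (z i)) ↔ _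
    cases x i <;> cases z i <;> simp
  have key : ∑ z : BitStr n, mutEA x (f z)
      = ∑ z : BitStr n, ∏ i : Fin n, (if z i then (1 / n : ℝ) else (1 - 1 / n)) := by
    apply Finset.sum_congr rfl
    intro z _
    rw [prod_if_eq, mutEA, ham]
  rw [key, ← Fintype.prod_sum fun (_ : Fin n) (b : Bool) => if b then (1 / n : ℝ) else 1 - 1 / n]
  have hb : ∀ i : Fin n, (∑ b : Bool, if b then (1 / n : ℝ) else 1 - 1 / n) = 1 := by
    intro i
    rw [Fintype.sum_bool]
    simp
  rw [Finset.prod_congr rfl (fun i _ => hb i), Finset.prod_const_one]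

lemma onesTail_lt_ones {n : ℕ} (hn : 1 ≤ n) (x : BitStr n) (hx : firstBit x = true) :
    onesTail x < ones x := by
  classical
  unfold onesTail ones
  apply Finset.card_lt_card
  constructor
  · intro i hi
    simp only [Finset.mem_filter] at *
    exact ⟨hi.1, hi.2.1⟩
  · intro hsub
    have h0 : (⟨0, hn⟩ : Fin n) ∈ Finset.univ.filter fun i => x i = true := by
      simp only [Finset.mem_filter, Finset.mem_univ, true_and]
      unfold firstBit at hx
      have h0 : 0 < n := hn
      rw [dif_pos h0] at hx
      exact hx
    have := hsub h0
    simp at this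

/-- For `w < -1`, a state `(x', x)` with first bit pattern
`(0, 1)`, `x ≠ 1^n` and `|x_{[2..n]}| ≥ w + n` has strictly better fitness than
any possible offspring, hence it is absorbing for the time-linkage (1+1) EA on
`f_w` (its transition row is the Dirac measure at `(x', x)`), and the EA
started there never reaches the global optimum. -/
theorem stmt0 (n : ℕ) (hn : 1 ≤ n) (w : ℤ) (hw : w < -1)
    (x' x : BitStr n) (hx' : firstBit x' = false) (hx : firstBit x = true)
    (hxne : x ≠ allOnes n) (htail : w + (n : ℤ) ≤ (onesTail x : ℤ)) :
    (∀ y : BitStr n, fW w x y < fW w x' x) ∧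
    (∀ t : TLState n, transEA w (x', x) t = if t = (x', x) then 1 else 0) ∧
    hitProb (transEA w) (OptNeg (n := n)) (x', x) = 0 := by
  classical
  have hfit : ∀ y : BitStr n, fW w x y < fW w x' x := by
    intro y
    have e1 : fW w x y = (ones y : ℤ) + w := by simp [fW, hx]
    have e2 : fW w x' x = (ones x : ℤ) := by simp [fW, hx']
    rw [e1, e2]
    have h1 : (ones y : ℤ) ≤ n := by exact_mod_cast ones_le y
    have h2 : (onesTail x : ℤ) < (ones x : ℤ) := by
      exact_mod_cast onesTail_lt_ones hn x hx
    omega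
  have htrans : ∀ t : TLState n, transEA w (x', x) t = if t = (x', x) then 1 else 0 := by
    intro t
    unfold transEA tlTrans
    simp only
    have h1 : (∑ y : BitStr n,
        if fW w x' x ≤ fW w x y ∧ t = (x, y) then mutEA x y else 0) = 0 := by
      apply Finset.sum_eq_zero
      intro y _
      have := hfit y
      rw [if_neg]
      rintro ⟨hle, -⟩
      omega
    have h2 : (∑ y : BitStr n,
        if ¬ fW w x' x ≤ fW w x y then mutEA x y else 0) = 1 := by
      rw [Finset.sum_congr rfl (fun y _ => if_pos (by have := hfit y; omega))]
      exact sum_mutEA hn x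
    rw [h1, h2, zero_add]
  have hnotOpt : ¬ OptNeg ((x', x) : TLState n) := by
    intro h
    exact hxne h.1
  have hhit : ∀ T : ℕ, hitWithin (transEA w) (OptNeg (n := n)) T (x', x) = 0 := by
    intro T
    induction T with
    | zero => simp [hitWithin, hnotOpt]
    | succ T ih =>
      rw [hitWithin, if_neg hnotOpt]
      rw [Finset.sum_congr rfl (fun t _ => by rw [htrans t])]
      simp [ite_mul, ih]
  refine ⟨hfit, htrans, ?_⟩
  unfold hitProb
  rw [iSup_congr hhit]
  exact ciSup_const
end

section
/- Let n ≥ 1 and let w ∈ ℤ with w < −1. Let x', x ∈ {0,1}^n satisfy x'_1 = 0, x_1 = 1, and x ≠ 1^n. Then for every y ∈ {0,1}^n obtained from x by flipping exactly one bit, one has f_w(x,y) < f_w(x',x). Consequently the state (x',x) is absorbing for the time-linkage RLS on f_w, so started from (x',x) the RLS never reaches the global optimum. -/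
open scoped Classical BigOperators ENNReal

section auxLemmas
open Finset

lemma ones_le_ham {n : ℕ} (x y : BitStr n) : ones y ≤ ones x + hamming x y := by
  classical
  have hsub : (univ.filter fun i => y i = true) ⊆
      (univ.filter fun i => x i = true) ∪ (univ.filter fun i => x i ≠ y i) := by
    intro i hi
    simp only [mem_filter, mem_univ, true_and, mem_union] at hi ⊢
    by_cases h : x i = true
    · exact Or.inl h
    · exact Or.inr fun hxy => h (hxy ▸ hi)
  calc ones y ≤ _ := card_le_card hsub
    _ ≤ ones x + hamming x y := card_union_le _ _

lemma ham_update {n : ℕ} (x : BitStr n) (i : Fin n) :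
    hamming x (Function.update x i (!x i)) = 1 := by
  classical
  unfold hamming
  have h : (univ.filter fun j => x j ≠ Function.update x i (!x i) j) = {i} := by
    ext j
    simp only [mem_filter, mem_univ, true_and, mem_singleton, Function.update_apply]
    by_cases h : j = i <;> simp [h]
  rw [h, card_singleton]

lemma card_ham_one {n : ℕ} (x : BitStr n) :
    (univ.filter fun y : BitStr n => hamming x y = 1).card = n := by
  classical
  have h := Finset.card_bij (s := (univ : Finset (Fin n)))
    (t := univ.filter fun y : BitStr n => hamming x y = 1)
    (fun i _ => Function.update x i (!x i)) ?_ ?_ ?_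
  · simpa using h.symm
  · intro i _
    simp only [mem_filter, mem_univ, true_and]
    exact ham_update x i
  · intro i _ j _ hij
    by_contra hne
    have := congrFun hij i
    simp only [Function.update_self, Function.update_apply, if_neg (fun h => hne h)] at this
    cases x i <;> simp_all
  · intro y hy
    simp only [mem_filter, mem_univ, true_and] at hy
    obtain ⟨i, hi⟩ := Finset.card_eq_one.mp hy
    refine ⟨i, mem_univ i, funext fun j => ?_⟩
    by_cases h : j = i
    · subst h
      have hji : j ∈ (univ.filter fun k => x k ≠ y k) := by rw [hi]; exact mem_singleton_self j
      simp only [mem_filter, mem_univ, true_and] at hji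
      simp only [Function.update_self]
      revert hji; cases x j <;> cases y j <;> simp
    · have hji : j ∉ (univ.filter fun k => x k ≠ y k) := by rw [hi]; simpa using h
      simp only [mem_filter, mem_univ, true_and, not_not] at hji
      simp only [Function.update_apply, if_neg h, hji]

lemma sum_mutRLS {n : ℕ} (hn : 1 ≤ n) (x : BitStr n) :
    ∑ y : BitStr n, mutRLS x y = 1 := by
  classical
  unfold mutRLS
  rw [← Finset.sum_filter, Finset.sum_const, card_ham_one, nsmul_eq_mul]
  have hn0 : (n : ℝ) ≠ 0 := by positivity
  field_simp

end auxLemmas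

/-- For `w < -1`, a state `(x', x)` with first bit pattern
`(0, 1)` and `x ≠ 1^n` has strictly better fitness than any offspring obtained
from `x` by flipping exactly one bit, hence it is absorbing for the
time-linkage RLS on `f_w`, and the RLS started there never reaches the global
optimum. -/
theorem stmt1 (n : ℕ) (hn : 1 ≤ n) (w : ℤ) (hw : w < -1)
    (x' x : BitStr n) (hx' : firstBit x' = false) (hx : firstBit x = true)
    (hxne : x ≠ allOnes n) :
    (∀ y : BitStr n, hamming x y = 1 → fW w x y < fW w x' x) ∧
    (∀ t : TLState n, transRLS w (x', x) t = if t = (x', x) then 1 else 0) ∧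
    hitProb (transRLS w) (OptNeg (n := n)) (x', x) = 0 := by
  classical
  have hfit : ∀ y : BitStr n, hamming x y = 1 → fW w x y < fW w x' x := by
    intro y hy
    have h1 : ones y ≤ ones x + 1 := by
      have := ones_le_ham x y; omega
    have h1' : (ones y : ℤ) ≤ (ones x : ℤ) + 1 := by exact_mod_cast h1
    simp only [fW, hx, hx', if_true, if_false, Bool.false_eq_true]
    omega
  have htrans : ∀ t : TLState n, transRLS w (x', x) t = if t = (x', x) then 1 else 0 := by
    intro t
    unfold transRLS tlTrans
    have hsum1 : (∑ y : BitStr n,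
        if fW w (x', x).1 (x', x).2 ≤ fW w (x', x).2 y ∧ t = ((x', x).2, y)
          then mutRLS (x', x).2 y else 0) = 0 := by
      apply Finset.sum_eq_zero
      intro y _
      split_ifs with h
      · by_cases hy : hamming x y = 1
        · exact absurd h.1 (not_le.2 (hfit y hy))
        · simp [mutRLS, hy]
      · rfl
    have hsum2 : (∑ y : BitStr n,
        if ¬ fW w (x', x).1 (x', x).2 ≤ fW w (x', x).2 y
          then mutRLS (x', x).2 y else 0) = 1 := by
      have heq : ∀ y : BitStr n,
          (if ¬ fW w (x', x).1 (x', x).2 ≤ fW w (x', x).2 y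
            then mutRLS (x', x).2 y else 0) = mutRLS x y := by
        intro y
        by_cases hy : hamming x y = 1
        · exact if_pos (not_le.2 (hfit y hy))
        · simp [mutRLS, hy]
      simp_rw [heq]
      exact sum_mutRLS hn x
    rw [hsum1, zero_add]
    split_ifs with h
    · exact hsum2
    · rfl
  refine ⟨hfit, htrans, ?_⟩
  have hopt : ¬ OptNeg (x', x) := fun h => hxne h.1
  have hzero : ∀ T, hitWithin (transRLS w) (OptNeg (n := n)) T (x', x) = 0 := by
    intro T
    induction T with
    | zero => simp [hitWithin, hopt]
    | succ T ih =>
      simp only [hitWithin, if_neg hopt]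
      rw [Finset.sum_eq_single (x', x)]
      · rw [htrans, if_pos rfl, one_mul, ih]
      · intro t _ ht; rw [htrans, if_neg ht, zero_mul]
      · intro h; exact absurd (Finset.mem_univ _) h
  unfold hitProb
  simp only [hzero]
  exact ciSup_const
end

section
/- Let b, c ∈ (0, 1/2) be constants, let n ≥ max{2^{1/c}, 4^e} be large enough that e·(log₂ n)² ≤ n^c, and let w ∈ ℤ with −n ≤ w ≤ −1. Consider the time-linkage RLS or (1+1) EA on f_w, conditioned on the initial current solution satisfying |X^1| > b·n. Then with probability at least 1 − 17·log₂ n / n, the chain does not reach the global optimum strictly before the first time at which the number of zero-bits of the current solution is less than n^c. -/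
open scoped Classical BigOperators ENNReal

namespace Stmt7Aux
open Finset
variable {n : ℕ}

lemma zeros_le (x : BitStr n) : zeros x ≤ n := by
  simpa [zeros] using (Finset.card_filter_le Finset.univ (fun i => x i = false))

lemma ones_add_zeros (x : BitStr n) : ones x + zeros x = n := by
  have h := Finset.card_filter_add_card_filter_not
    (s := (Finset.univ : Finset (Fin n))) (p := fun i => x i = true)
  simpa [ones, zeros, Bool.not_eq_true] using h

lemma zeros_allOnes : zeros (allOnes n) = 0 := by simp [zeros, allOnes]

lemma hamming_allOnes (x : BitStr n) : hamming x (allOnes n) = zeros x := by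
  simp [hamming, allOnes, zeros, Bool.not_eq_true]

lemma mutEA_nonneg (hn : 1 ≤ n) (x y : BitStr n) : 0 ≤ mutEA x y := by
  have h1 : (0:ℝ) ≤ 1/n := by positivity
  have h2 : (0:ℝ) ≤ 1 - 1/n := by
    rw [sub_nonneg, div_le_one (by exact_mod_cast Nat.lt_of_lt_of_le Nat.zero_lt_one hn)]
    exact_mod_cast hn
  exact mul_nonneg (pow_nonneg h1 _) (pow_nonneg h2 _)

lemma mutRLS_nonneg (x y : BitStr n) : 0 ≤ mutRLS x y := by
  unfold mutRLS; split
  · positivity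
  · exact le_rfl

lemma mutEA_eq_prod (x y : BitStr n) :
    mutEA x y = ∏ i : Fin n, (if y i = x i then (1 - 1/(n:ℝ)) else 1/n) := by
  rw [Finset.prod_ite, Finset.prod_const, Finset.prod_const]
  have hcd : (univ.filter fun i => ¬ y i = x i).card = hamming x y := by
    unfold hamming; congr 1
    apply Finset.filter_congr; intro i _; simp [eq_comm]
  have hce : (univ.filter fun i => y i = x i).card = n - hamming x y := by
    have h := Finset.card_filter_add_card_filter_not
      (s := (Finset.univ : Finset (Fin n))) (p := fun i => y i = x i)
    simp only [Finset.card_univ, Fintype.card_fin] at h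
    omega
  rw [hcd, hce, mutEA, mul_comm]

lemma sum_mutEA (x : BitStr n) : ∑ y : BitStr n, mutEA x y = 1 := by
  calc ∑ y : BitStr n, mutEA x y
      = ∑ y : BitStr n, ∏ i : Fin n, (if y i = x i then (1 - 1/(n:ℝ)) else 1/n) :=
        Finset.sum_congr rfl (fun y _ => mutEA_eq_prod x y)
    _ = ∏ i : Fin n, ∑ b : Bool, (if b = x i then (1 - 1/(n:ℝ)) else 1/n) :=
        (Fintype.prod_sum (fun i b => if b = x i then (1 - 1/(n:ℝ)) else 1/n)).symm
    _ = ∏ i : Fin n, (1:ℝ) := by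
        refine Finset.prod_congr rfl (fun i _ => ?_)
        rw [Fintype.sum_bool]
        cases h : x i <;> simp [h]
    _ = 1 := Finset.prod_const_one

lemma sum_mutRLS (hn : 1 ≤ n) (x : BitStr n) : ∑ y : BitStr n, mutRLS x y ≤ 1 := by
  have hsub : (univ.filter fun y : BitStr n => hamming x y = 1) ⊆
      Finset.image (fun i : Fin n => Function.update x i (!x i)) univ := by
    intro y hy
    have hy1 : hamming x y = 1 := (Finset.mem_filter.1 hy).2
    obtain ⟨a, ha⟩ := Finset.card_eq_one.1 hy1
    refine Finset.mem_image.2 ⟨a, Finset.mem_univ _, ?_⟩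
    funext i
    by_cases hia : i = a
    · subst hia
      have : i ∈ (univ.filter fun j => x j ≠ y j) := by rw [ha]; exact Finset.mem_singleton_self _
      have hne : x i ≠ y i := (Finset.mem_filter.1 this).2
      rw [Function.update_self]
      cases h1 : x i <;> cases h2 : y i <;> simp_all
    · have : i ∉ (univ.filter fun j => x j ≠ y j) := by rw [ha]; simp [hia]
      have heq : x i = y i := by
        by_contra hcon; exact this (Finset.mem_filter.2 ⟨Finset.mem_univ _, hcon⟩)
      rw [Function.update_of_ne hia, heq]
  have hcard : (univ.filter fun y : BitStr n => hamming x y = 1).card ≤ n := by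
    refine le_trans (Finset.card_le_card hsub) (le_trans Finset.card_image_le ?_)
    simp
  have hsum : ∑ y : BitStr n, mutRLS x y
      = ((univ.filter fun y : BitStr n => hamming x y = 1).card : ℝ) * (1/n) := by
    unfold mutRLS
    rw [← Finset.sum_filter, Finset.sum_const, nsmul_eq_mul]
  rw [hsum]
  have hn0 : (0:ℝ) < n := by exact_mod_cast hn
  calc ((univ.filter fun y : BitStr n => hamming x y = 1).card : ℝ) * (1/n)
      ≤ (n:ℝ) * (1/n) := by
        apply mul_le_mul_of_nonneg_right _ (by positivity)
        exact_mod_cast hcard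
    _ = 1 := by field_simp

variable {w : ℤ} {m : BitStr n → BitStr n → ℝ}

lemma tlTrans_nonneg (hm0 : ∀ x y, 0 ≤ m x y) (s t : TLState n) : 0 ≤ tlTrans m w s t := by
  unfold tlTrans
  apply add_nonneg
  · apply Finset.sum_nonneg; intro y _; split
    · exact hm0 _ _
    · exact le_rfl
  · split
    · apply Finset.sum_nonneg; intro y _; split
      · exact hm0 _ _
      · exact le_rfl
    · exact le_rfl

lemma tlTrans_apply_ne {s t : TLState n} (h1 : t.1 = s.2) (h2 : t ≠ s) :
    tlTrans m w s t = if fW w s.1 s.2 ≤ fW w s.2 t.2 then m s.2 t.2 else 0 := by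
  unfold tlTrans
  rw [if_neg h2, add_zero]
  have hterm : ∀ y : BitStr n,
      (if fW w s.1 s.2 ≤ fW w s.2 y ∧ t = (s.2, y) then m s.2 y else 0)
        = if y = t.2 then (if fW w s.1 s.2 ≤ fW w s.2 t.2 then m s.2 t.2 else 0) else 0 := by
    intro y
    by_cases hy : y = t.2
    · subst hy
      have ht : t = (s.2, t.2) := Prod.ext h1 rfl
      rw [if_pos rfl]
      exact if_congr (and_iff_left ht) rfl rfl
    · rw [if_neg hy, if_neg]
      rintro ⟨-, hcon⟩
      exact hy (by rw [hcon])
  rw [Finset.sum_congr rfl (fun y _ => hterm y), Finset.sum_ite_eq' Finset.univ t.2,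
    if_pos (Finset.mem_univ _)]

lemma tlTrans_eq_zero {s t : TLState n} (h1 : t.1 ≠ s.2) (h2 : t ≠ s) :
    tlTrans m w s t = 0 := by
  unfold tlTrans
  rw [if_neg h2, add_zero]
  apply Finset.sum_eq_zero
  intro y _
  rw [if_neg]
  rintro ⟨-, hcon⟩
  exact h1 (by rw [hcon])

lemma tlTrans_rowsum (hm1 : ∀ x, ∑ y : BitStr n, m x y ≤ 1) (s : TLState n) :
    ∑ t : TLState n, tlTrans m w s t ≤ 1 := by
  unfold tlTrans
  rw [Finset.sum_add_distrib]
  have h1 : ∑ t : TLState n, (∑ y : BitStr n,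
      if fW w s.1 s.2 ≤ fW w s.2 y ∧ t = (s.2, y) then m s.2 y else 0)
      = ∑ y : BitStr n, (if fW w s.1 s.2 ≤ fW w s.2 y then m s.2 y else 0) := by
    rw [Finset.sum_comm]
    refine Finset.sum_congr rfl (fun y _ => ?_)
    have hterm : ∀ t : TLState n,
        (if fW w s.1 s.2 ≤ fW w s.2 y ∧ t = (s.2, y) then m s.2 y else 0)
          = if t = (s.2, y) then (if fW w s.1 s.2 ≤ fW w s.2 y then m s.2 y else 0) else 0 := by
      intro t
      by_cases ht : t = (s.2, y) <;> by_cases hf : fW w s.1 s.2 ≤ fW w s.2 y <;>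
        simp [ht, hf]
    rw [Finset.sum_congr rfl (fun t _ => hterm t), Finset.sum_ite_eq' Finset.univ,
      if_pos (Finset.mem_univ _)]
  have h2 : ∑ t : TLState n, (if t = s then
      (∑ y : BitStr n, if ¬ fW w s.1 s.2 ≤ fW w s.2 y then m s.2 y else 0) else 0)
      = ∑ y : BitStr n, (if ¬ fW w s.1 s.2 ≤ fW w s.2 y then m s.2 y else 0) := by
    rw [Finset.sum_ite_eq' Finset.univ, if_pos (Finset.mem_univ _)]
  rw [h1, h2, ← Finset.sum_add_distrib]
  refine le_trans (le_of_eq (Finset.sum_congr rfl (fun y _ => ?_))) (hm1 s.2)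
  by_cases hC : fW w s.1 s.2 ≤ fW w s.2 y <;> simp [hC]

variable {P : TLState n → TLState n → ℝ} {A E : TLState n → Prop}

lemma hitWithin_zero (s : TLState n) : hitWithin P E 0 s = if E s then 1 else 0 := rfl

lemma hitWithin_succ (T : ℕ) (s : TLState n) :
    hitWithin P E (T+1) s = if E s then 1 else ∑ t : TLState n, P s t * hitWithin P E T t := rfl

lemma fhiw_zero (s : TLState n) :
    firstHitInWithin P A E 0 s = if A s then (if E s then 1 else 0) else 0 := rfl

lemma fhiw_succ (T : ℕ) (s : TLState n) :
    firstHitInWithin P A E (T+1) s = if A s then (if E s then 1 else 0)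
      else ∑ t : TLState n, P s t * firstHitInWithin P A E T t := rfl

lemma hitWithin_nonneg (hP0 : ∀ s t, 0 ≤ P s t) :
    ∀ (T : ℕ) (s : TLState n), 0 ≤ hitWithin P E T s := by
  intro T
  induction T with
  | zero => intro s; rw [hitWithin_zero]; split <;> norm_num
  | succ T ih =>
      intro s; rw [hitWithin_succ]; split
      · norm_num
      · exact Finset.sum_nonneg fun t _ => mul_nonneg (hP0 s t) (ih t)

lemma hitWithin_le_one (hP0 : ∀ s t, 0 ≤ P s t)
    (hP1 : ∀ s, ∑ t : TLState n, P s t ≤ 1) :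
    ∀ (T : ℕ) (s : TLState n), hitWithin P E T s ≤ 1 := by
  intro T
  induction T with
  | zero => intro s; rw [hitWithin_zero]; split <;> norm_num
  | succ T ih =>
      intro s; rw [hitWithin_succ]; split
      · exact le_rfl
      · calc ∑ t : TLState n, P s t * hitWithin P E T t
            ≤ ∑ t : TLState n, P s t := by
              refine Finset.sum_le_sum fun t _ => ?_
              calc P s t * hitWithin P E T t ≤ P s t * 1 :=
                    mul_le_mul_of_nonneg_left (ih t) (hP0 s t)
                _ = P s t := mul_one _
          _ ≤ 1 := hP1 s

lemma hitWithin_of_mem {t : TLState n} (h : E t) (T : ℕ) : hitWithin P E T t = 1 := by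
  cases T
  · rw [hitWithin_zero, if_pos h]
  · rw [hitWithin_succ, if_pos h]

lemma fhiw_of_mem {t : TLState n} (h : A t) (T : ℕ) :
    firstHitInWithin P A E T t = if E t then 1 else 0 := by
  cases T
  · rw [fhiw_zero, if_pos h]
  · rw [fhiw_succ, if_pos h]

lemma fhiw_le {ρ : ℝ} (hρ : 0 ≤ ρ) (hP0 : ∀ s t, 0 ≤ P s t)
    (hkey : ∀ s, ¬ A s →
      ∑ t ∈ Finset.univ.filter (fun t => A t ∧ E t), P s t
        ≤ ρ * ∑ t ∈ Finset.univ.filter A, P s t) :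
    ∀ (T : ℕ) (s : TLState n), ¬ A s →
      firstHitInWithin P A E T s ≤ ρ * hitWithin P A T s := by
  intro T
  induction T with
  | zero =>
      intro s hs
      rw [fhiw_zero, hitWithin_zero, if_neg hs, if_neg hs, mul_zero]
  | succ T ih =>
      intro s hs
      rw [fhiw_succ, hitWithin_succ, if_neg hs, if_neg hs]
      rw [← Finset.sum_filter_add_sum_filter_not Finset.univ A
        (fun t => P s t * firstHitInWithin P A E T t)]
      rw [← Finset.sum_filter_add_sum_filter_not Finset.univ A
        (fun t => P s t * hitWithin P A T t), mul_add]
      apply add_le_add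
      · have he1 : ∑ t ∈ Finset.univ.filter A, P s t * firstHitInWithin P A E T t
            = ∑ t ∈ Finset.univ.filter (fun t => A t ∧ E t), P s t := by
          have step1 : ∑ t ∈ Finset.univ.filter A, P s t * firstHitInWithin P A E T t
              = ∑ t ∈ Finset.univ.filter A, (if E t then P s t else 0) :=
            Finset.sum_congr rfl fun t ht => by
              rw [fhiw_of_mem (Finset.mem_filter.1 ht).2]
              by_cases hE : E t <;> simp [hE]
          rw [step1, ← Finset.sum_filter, Finset.filter_filter]
        have he2 : ∑ t ∈ Finset.univ.filter A, P s t * hitWithin P A T t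
            = ∑ t ∈ Finset.univ.filter A, P s t := by
          refine Finset.sum_congr rfl fun t ht => ?_
          rw [hitWithin_of_mem (Finset.mem_filter.1 ht).2, mul_one]
        rw [he1, he2]
        exact hkey s hs
      · rw [Finset.mul_sum]
        refine Finset.sum_le_sum fun t ht => ?_
        have hnt : ¬ A t := by simpa using (Finset.mem_filter.1 ht).2
        calc P s t * firstHitInWithin P A E T t
            ≤ P s t * (ρ * hitWithin P A T t) :=
              mul_le_mul_of_nonneg_left (ih t hnt) (hP0 s t)
          _ = ρ * (P s t * hitWithin P A T t) := by ring

lemma fhip_le {ρ : ℝ} (hρ : 0 ≤ ρ) (hP0 : ∀ s t, 0 ≤ P s t)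
    (hP1 : ∀ s, ∑ t : TLState n, P s t ≤ 1)
    (hkey : ∀ s, ¬ A s →
      ∑ t ∈ Finset.univ.filter (fun t => A t ∧ E t), P s t
        ≤ ρ * ∑ t ∈ Finset.univ.filter A, P s t)
    (s : TLState n) :
    firstHitInProb P A E s ≤ (if E s then 1 else 0) + ρ := by
  refine ciSup_le fun T => ?_
  by_cases hs : A s
  · rw [fhiw_of_mem hs]
    exact le_add_of_nonneg_right hρ
  · calc firstHitInWithin P A E T s ≤ ρ * hitWithin P A T s := fhiw_le hρ hP0 hkey T s hs
      _ ≤ ρ * 1 := mul_le_mul_of_nonneg_left (hitWithin_le_one hP0 hP1 T s) hρ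
      _ = ρ := mul_one _
      _ ≤ _ := le_add_of_nonneg_left (by split <;> norm_num)

lemma key_reduction (hm0 : ∀ x y, 0 ≤ m x y) {s : TLState n} (hs : ¬ A s) :
    ∑ t ∈ Finset.univ.filter (fun t => A t ∧ OptNeg t), tlTrans m w s t
      ≤ if firstBit s.2 = false then m s.2 (allOnes n) else 0 := by
  by_cases hb : firstBit s.2 = false
  · rw [if_pos hb]
    set t₁ : TLState n := (s.2, allOnes n) with ht₁
    have hz : ∀ t ∈ Finset.univ.filter (fun t => A t ∧ OptNeg t), t ≠ t₁ →
        tlTrans m w s t = 0 := by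
      intro t ht hne
      obtain ⟨-, hA, hall, -⟩ :
          t ∈ Finset.univ ∧ A t ∧ t.2 = allOnes n ∧ firstBit t.1 = false := by
        have := Finset.mem_filter.1 ht
        exact ⟨this.1, this.2.1, this.2.2.1, this.2.2.2⟩
      apply tlTrans_eq_zero
      · intro hcon
        exact hne (Prod.ext hcon hall)
      · intro hcon
        exact hs (hcon ▸ hA)
    calc ∑ t ∈ Finset.univ.filter (fun t => A t ∧ OptNeg t), tlTrans m w s t
        = ∑ t ∈ Finset.univ.filter (fun t => A t ∧ OptNeg t),
            (if t = t₁ then tlTrans m w s t else 0) := by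
          refine Finset.sum_congr rfl fun t ht => ?_
          by_cases h : t = t₁
          · rw [if_pos h]
          · rw [if_neg h, hz t ht h]
      _ = if t₁ ∈ Finset.univ.filter (fun t => A t ∧ OptNeg t) then tlTrans m w s t₁ else 0 :=
          Finset.sum_ite_eq' _ _ _
      _ ≤ m s.2 (allOnes n) := by
          split
          · rename_i hmem
            have hne : t₁ ≠ s := by
              intro hcon
              exact hs (hcon ▸ (Finset.mem_filter.1 hmem).2.1)
            rw [tlTrans_apply_ne rfl hne]
            split
            · exact le_rfl
            · exact hm0 _ _
          · exact hm0 _ _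
  · rw [if_neg hb]
    apply le_of_eq
    apply Finset.sum_eq_zero
    intro t ht
    have hmem := Finset.mem_filter.1 ht
    apply tlTrans_eq_zero
    · intro hcon
      exact hb (hcon ▸ hmem.2.2.2)
    · intro hcon
      exact hs (hcon ▸ hmem.2.1)

lemma keyRLS (h2n : 2 ≤ n)
    (hA1 : ∀ s : TLState n, ¬ A s → 2 ≤ zeros s.2) {s : TLState n} (hs : ¬ A s) :
    ∑ t ∈ Finset.univ.filter (fun t => A t ∧ OptNeg t), tlTrans mutRLS w s t
      ≤ (1/((n:ℝ)-1)) * ∑ t ∈ Finset.univ.filter A, tlTrans mutRLS w s t := by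
  have hzero : mutRLS s.2 (allOnes n) = 0 := by
    unfold mutRLS
    rw [hamming_allOnes, if_neg]
    have := hA1 s hs; omega
  refine le_trans (key_reduction (fun x y => mutRLS_nonneg x y) hs) ?_
  have hle : (if firstBit s.2 = false then mutRLS s.2 (allOnes n) else 0) ≤ 0 := by
    split
    · exact le_of_eq hzero
    · exact le_rfl
  refine le_trans hle ?_
  have hn1R : (0:ℝ) < (n:ℝ) - 1 := by
    have : (2:ℝ) ≤ n := by exact_mod_cast h2n
    linarith
  apply mul_nonneg (by positivity)
  exact Finset.sum_nonneg fun t _ => tlTrans_nonneg (fun x y => mutRLS_nonneg x y) s t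

lemma keyEA (h2n : 2 ≤ n) (hw0 : w ≤ 0)
    (hA1 : ∀ s : TLState n, ¬ A s → 2 ≤ zeros s.2)
    (hA2 : ∀ t : TLState n, zeros t.2 ≤ 1 → A t) {s : TLState n} (hs : ¬ A s) :
    ∑ t ∈ Finset.univ.filter (fun t => A t ∧ OptNeg t), tlTrans mutEA w s t
      ≤ (1/((n:ℝ)-1)) * ∑ t ∈ Finset.univ.filter A, tlTrans mutEA w s t := by
  have h1n : 1 ≤ n := le_trans (by norm_num) h2n
  have hmEA0 : ∀ x y : BitStr n, 0 ≤ mutEA x y := mutEA_nonneg h1n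
  have hn0R : (0:ℝ) < n := by exact_mod_cast lt_of_lt_of_le Nat.zero_lt_two h2n
  have hn1R : (0:ℝ) < (n:ℝ) - 1 := by
    have : (2:ℝ) ≤ n := by exact_mod_cast h2n
    linarith
  have hsumnn : 0 ≤ ∑ t ∈ Finset.univ.filter A, tlTrans mutEA w s t :=
    Finset.sum_nonneg fun t _ => tlTrans_nonneg hmEA0 s t
  refine le_trans (key_reduction hmEA0 hs) ?_
  by_cases hb : firstBit s.2 = false
  swap
  · rw [if_neg hb]
    exact mul_nonneg (by positivity) hsumnn
  rw [if_pos hb]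
  set k := zeros s.2 with hk
  have hk2 : 2 ≤ k := hA1 s hs
  have hkn : k ≤ n := zeros_le s.2
  -- choose a zero position j
  have hex : ∃ j, s.2 j = false := by
    by_contra hcon
    push_neg at hcon
    have hz0 : zeros s.2 = 0 := by
      unfold zeros
      rw [Finset.card_eq_zero, Finset.filter_eq_empty_iff]
      intro i _
      exact hcon i
    omega
  obtain ⟨j, hj⟩ := hex
  set y₀ : BitStr n := fun i => if i = j then false else true with hy₀
  have hzy : zeros y₀ = 1 := by
    have hset : (Finset.univ.filter fun i => y₀ i = false)
        = Finset.univ.filter (fun i => i = j) := by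
      apply Finset.filter_congr
      intro i _
      by_cases h : i = j <;> simp [hy₀, h]
    rw [zeros, hset, Finset.filter_eq']
    simp
  have hham : hamming s.2 y₀ = k - 1 := by
    have hset : (Finset.univ.filter fun i => s.2 i ≠ y₀ i)
        = (Finset.univ.filter fun i => s.2 i = false).erase j := by
      ext i
      by_cases h : i = j
      · subst h
        simp [hy₀, hj]
      · cases hsi : s.2 i <;> simp [hy₀, h, hsi]
    have hjmem : j ∈ Finset.univ.filter (fun i => s.2 i = false) :=
      Finset.mem_filter.2 ⟨Finset.mem_univ _, hj⟩
    rw [hamming, hset, Finset.card_erase_of_mem hjmem, hk, zeros]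
  have hA_t0 : A (s.2, y₀) := hA2 _ (le_of_eq hzy)
  have ht0ne : ((s.2, y₀) : TLState n) ≠ s := fun h => hs (h ▸ hA_t0)
  have hones2 : (ones s.2 : ℤ) = (n : ℤ) - k := by
    have := ones_add_zeros s.2
    omega
  have honesy : (ones y₀ : ℤ) = (n : ℤ) - 1 := by
    have h := ones_add_zeros y₀
    rw [hzy] at h
    omega
  have hacc : fW w s.1 s.2 ≤ fW w s.2 y₀ := by
    unfold fW
    rw [hb]
    simp only [Bool.false_eq_true, if_false, add_zero]
    have hpen : (if firstBit s.1 then w else 0) ≤ 0 := by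
      split
      · exact hw0
      · exact le_rfl
    have hk2' : (2:ℤ) ≤ k := by exact_mod_cast hk2
    omega
  have hPt0 : tlTrans mutEA w s (s.2, y₀) = mutEA s.2 y₀ := by
    rw [tlTrans_apply_ne rfl ht0ne, if_pos hacc]
  have hsum_ge : mutEA s.2 y₀ ≤ ∑ t ∈ Finset.univ.filter A, tlTrans mutEA w s t := by
    rw [← hPt0]
    exact Finset.single_le_sum (fun t _ => tlTrans_nonneg hmEA0 s t)
      (Finset.mem_filter.2 ⟨Finset.mem_univ _, hA_t0⟩)
  have hmval : mutEA s.2 (allOnes n) = (1/((n:ℝ)-1)) * mutEA s.2 y₀ := by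
    unfold mutEA
    rw [hamming_allOnes, hham, ← hk]
    have e1 : n - (k-1) = (n-k)+1 := by omega
    have e2 : k = (k-1)+1 := by omega
    rw [e1, pow_succ, show ((1:ℝ)/n)^k = (1/n:ℝ)^(k-1) * (1/n) from by rw [← pow_succ, ← e2]]
    have hq : (1 - 1/(n:ℝ)) = ((n:ℝ)-1)/n := by field_simp
    rw [hq]
    field_simp
  calc mutEA s.2 (allOnes n) = (1/((n:ℝ)-1)) * mutEA s.2 y₀ := hmval
    _ ≤ (1/((n:ℝ)-1)) * ∑ t ∈ Finset.univ.filter A, tlTrans mutEA w s t :=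
        mul_le_mul_of_nonneg_left hsum_ge (by positivity)

lemma card_bitstr : Fintype.card (BitStr n) = 2^n := by
  simp [Fintype.card_fun]

lemma card_Phi_ge (hn : 1 ≤ n) {b : ℝ} (hb2 : b < 1/2) :
    2^n * 2^(n-1) ≤ (Finset.univ.filter fun s : TLState n => b * n < (ones s.2 : ℝ)).card := by
  classical
  set G : Finset (BitStr n) := Finset.univ.filter (fun x => b * (n:ℝ) < (ones x : ℝ)) with hG
  have hsub : (Finset.univ ×ˢ G) ⊆
      Finset.univ.filter (fun s : TLState n => b * n < (ones s.2 : ℝ)) := by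
    intro s hsm
    rw [Finset.mem_product] at hsm
    exact Finset.mem_filter.2 ⟨Finset.mem_univ _, (Finset.mem_filter.1 hsm.2).2⟩
  have h1 := Finset.card_le_card hsub
  rw [Finset.card_product, Finset.card_univ, card_bitstr] at h1
  have hn0 : (0:ℝ) < n := by exact_mod_cast hn
  have hGcard : 2^(n-1) ≤ G.card := by
    have hpair : (Finset.univ.filter fun x : BitStr n => ¬ (b * (n:ℝ) < (ones x : ℝ))).card
        ≤ G.card := by
      apply Finset.card_le_card_of_injOn (fun x => fun i => ! x i)
      · intro x hx
        have hox : (ones x : ℝ) ≤ b * n := not_lt.1 (Finset.mem_filter.1 hx).2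
        have honot : ones (fun i => ! x i) = zeros x := by
          unfold ones zeros
          congr 1
          apply Finset.filter_congr
          intro i _
          simp
        refine Finset.mem_filter.2 ⟨Finset.mem_univ _, ?_⟩
        rw [honot]
        have hoz : (ones x : ℝ) + (zeros x : ℝ) = n := by
          exact_mod_cast congrArg (Nat.cast : ℕ → ℝ) (ones_add_zeros x)
        have hbn : b * (n:ℝ) < (1/2) * n := mul_lt_mul_of_pos_right hb2 hn0
        linarith
      · intro x _ y _ h
        funext i
        have := congrFun h i
        simpa using this
    have htot : G.card + (Finset.univ.filter fun x : BitStr n =>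
        ¬ (b * (n:ℝ) < (ones x : ℝ))).card = 2^n := by
      rw [Finset.card_filter_add_card_filter_not, Finset.card_univ, card_bitstr]
    have hpow : 2^n = 2 * 2^(n-1) := by
      rw [← pow_succ']
      congr 1
      omega
    omega
  calc 2^n * 2^(n-1) ≤ 2^n * G.card := Nat.mul_le_mul_left _ hGcard
    _ ≤ _ := h1

lemma card_opt_le {b : ℝ} :
    ((Finset.univ.filter fun s : TLState n => b * n < (ones s.2 : ℝ)).filter OptNeg).card
      ≤ 2^n := by
  classical
  have hsub : ((Finset.univ.filter fun s : TLState n => b * n < (ones s.2 : ℝ)).filter OptNeg)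
      ⊆ Finset.univ.filter (fun s : TLState n => s.2 = allOnes n) := by
    intro s hsm
    have h := Finset.mem_filter.1 hsm
    exact Finset.mem_filter.2 ⟨Finset.mem_univ _, h.2.1⟩
  refine le_trans (Finset.card_le_card hsub) ?_
  have hinj : Set.InjOn (Prod.fst : TLState n → BitStr n)
      (Finset.univ.filter (fun s : TLState n => s.2 = allOnes n)) := by
    intro a ha b hb hab
    have ha2 := (Finset.mem_filter.1 ha).2
    have hb2 := (Finset.mem_filter.1 hb).2
    exact Prod.ext hab (ha2.trans hb2.symm)
  calc (Finset.univ.filter (fun s : TLState n => s.2 = allOnes n)).card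
      ≤ (Finset.univ : Finset (BitStr n)).card :=
        Finset.card_le_card_of_injOn Prod.fst (fun a _ => Finset.mem_univ _) hinj
    _ = 2^n := by rw [Finset.card_univ, card_bitstr]

lemma master (hn4 : 4 ≤ n) (hlogb : 1 ≤ Real.logb 2 n) {b : ℝ} (hb2 : b < 1/2)
    (P : TLState n → TLState n → ℝ) (A : TLState n → Prop)
    (hbound : ∀ s : TLState n,
      firstHitInProb P A OptNeg s ≤ (if OptNeg s then 1 else 0) + 1/((n:ℝ)-1)) :
    1 - (∑ s ∈ Finset.univ.filter fun s : TLState n => b * n < (ones s.2 : ℝ),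
          firstHitInProb P A OptNeg s) /
        ((Finset.univ.filter fun s : TLState n => b * n < (ones s.2 : ℝ)).card : ℝ)
      ≥ 1 - 17 * Real.logb 2 n / n := by
  classical
  set Φ := Finset.univ.filter fun s : TLState n => b * n < (ones s.2 : ℝ) with hΦ
  set ρ : ℝ := 1/((n:ℝ)-1) with hρdef
  have hn1 : 1 ≤ n := by omega
  have hnR : (4:ℝ) ≤ n := by exact_mod_cast hn4
  have hn0R : (0:ℝ) < n := by linarith
  have hn1R : (0:ℝ) < (n:ℝ) - 1 := by linarith
  have hρ0 : 0 ≤ ρ := by positivity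
  have hC : 2^n * 2^(n-1) ≤ Φ.card := card_Phi_ge hn1 hb2
  have hCpos : 0 < Φ.card := lt_of_lt_of_le (by positivity) hC
  have hCR : (0:ℝ) < (Φ.card : ℝ) := by exact_mod_cast hCpos
  have hS : ∑ s ∈ Φ, firstHitInProb P A OptNeg s ≤ (2^n : ℝ) + (Φ.card : ℝ) * ρ := by
    calc ∑ s ∈ Φ, firstHitInProb P A OptNeg s
        ≤ ∑ s ∈ Φ, ((if OptNeg s then (1:ℝ) else 0) + ρ) :=
          Finset.sum_le_sum (fun s _ => hbound s)
      _ = (∑ s ∈ Φ, (if OptNeg s then (1:ℝ) else 0)) + (Φ.card : ℝ) * ρ := by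
          rw [Finset.sum_add_distrib, Finset.sum_const, nsmul_eq_mul]
      _ = ((Φ.filter OptNeg).card : ℝ) + (Φ.card : ℝ) * ρ := by rw [Finset.sum_boole]
      _ ≤ (2^n : ℝ) + (Φ.card : ℝ) * ρ := by
          have h := card_opt_le (n := n) (b := b)
          have h' : ((Φ.filter OptNeg).card : ℝ) ≤ (2^n : ℝ) := by exact_mod_cast h
          linarith
  have key : (∑ s ∈ Φ, firstHitInProb P A OptNeg s) / (Φ.card : ℝ)
      ≤ 17 * Real.logb 2 n / n := by
    have hstep1 : (∑ s ∈ Φ, firstHitInProb P A OptNeg s) / (Φ.card : ℝ)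
        ≤ ((2^n : ℝ) + (Φ.card : ℝ) * ρ) / (Φ.card : ℝ) := by gcongr
    have hstep2 : ((2^n : ℝ) + (Φ.card : ℝ) * ρ) / (Φ.card : ℝ)
        = (2^n : ℝ) / (Φ.card : ℝ) + ρ := by
      rw [add_div, mul_comm, mul_div_assoc, div_self (ne_of_gt hCR), mul_one]
    have hstep3 : (2^n : ℝ) / (Φ.card : ℝ) ≤ 1/(n:ℝ) := by
      have hCge : ((2:ℝ)^n * 2^(n-1)) ≤ (Φ.card : ℝ) := by exact_mod_cast hC
      have h2 : (2^n : ℝ) / (Φ.card : ℝ) ≤ (2^n : ℝ) / ((2:ℝ)^n * 2^(n-1)) := by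
        gcongr
      have h3 : (2^n : ℝ) / ((2:ℝ)^n * 2^(n-1)) = 1/(2:ℝ)^(n-1) := by
        field_simp
      have hnpow : (n:ℝ) ≤ (2:ℝ)^(n-1) := by
        have hnat : n ≤ 2^(n-1) := by
          have := Nat.lt_two_pow_self (n := n-1)
          omega
        exact_mod_cast hnat
      have h4 : (1:ℝ)/(2:ℝ)^(n-1) ≤ 1/(n:ℝ) := by
        apply one_div_le_one_div_of_le hn0R hnpow
      linarith
    have hstep4 : ρ ≤ 2/(n:ℝ) := by
      rw [hρdef, div_le_div_iff₀ hn1R hn0R]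
      linarith
    have hfin : 1/(n:ℝ) + 2/(n:ℝ) ≤ 17 * Real.logb 2 n / n := by
      have h3n : (1/(n:ℝ) + 2/(n:ℝ)) = 3/(n:ℝ) := by ring
      rw [h3n, div_le_div_iff₀ hn0R hn0R]
      nlinarith [hlogb, hn0R]
    linarith
  linarith

end Stmt7Aux

/-- Let `b, c ∈ (0, 1/2)`, let `n ≥ max {2^{1/c}, 4^e}` with
`e·(log₂ n)² ≤ n^c`, and let `-n ≤ w ≤ -1`. For the time-linkage RLS and
(1+1) EA on `f_w`, conditioned on the uniformly random initial state having
its current solution satisfy `|X^1| > b·n`, with probability at least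
`1 - 17·log₂ n / n` the chain does not reach the global optimum strictly
before the first time at which the number of zero-bits of the current solution
is below `n^c` (i.e. the first state with fewer than `n^c` zero-bits, if it is
ever entered, is not the global optimum). -/
theorem stmt7 (b c : ℝ) (hb : b ∈ Set.Ioo (0 : ℝ) (1 / 2))
    (hc : c ∈ Set.Ioo (0 : ℝ) (1 / 2)) (n : ℕ)
    (hn1 : (2 : ℝ) ^ (1 / c) ≤ n) (hn2 : (4 : ℝ) ^ eu ≤ n)
    (hn3 : eu * (Real.logb 2 n) ^ 2 ≤ (n : ℝ) ^ c)
    (w : ℤ) (hw1 : -(n : ℤ) ≤ w) (hw2 : w ≤ -1) :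
    ∀ P ∈ ({transEA (n := n) w, transRLS (n := n) w} :
        Set (TLState n → TLState n → ℝ)),
      1 - (∑ s ∈ Finset.univ.filter fun s : TLState n => b * n < (ones s.2 : ℝ),
            firstHitInProb P (fun t => (zeros t.2 : ℝ) < (n : ℝ) ^ c) OptNeg s) /
          ((Finset.univ.filter fun s : TLState n => b * n < (ones s.2 : ℝ)).card : ℝ)
        ≥ 1 - 17 * Real.logb 2 n / n := by
  classical
  obtain ⟨hb0, hb2⟩ := hb
  obtain ⟨hc0, hc2⟩ := hc
  have heu1 : (1:ℝ) ≤ eu := by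
    have := Real.add_one_le_exp 1
    unfold eu
    linarith
  have h4R : (4:ℝ) ≤ n := by
    refine le_trans ?_ hn2
    calc (4:ℝ) = 4^(1:ℝ) := (Real.rpow_one 4).symm
      _ ≤ 4^eu := Real.rpow_le_rpow_of_exponent_le (by norm_num) heu1
  have hn4 : 4 ≤ n := by exact_mod_cast h4R
  have h2n : 2 ≤ n := by omega
  have h1n : 1 ≤ n := by omega
  have hn1R : (0:ℝ) < (n:ℝ) - 1 := by linarith
  have hρ0 : (0:ℝ) ≤ 1/((n:ℝ)-1) := by positivity
  have h2c : (2:ℝ) ≤ (n:ℝ)^c := by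
    have h2 : ((2:ℝ)^(1/c))^c ≤ (n:ℝ)^c :=
      Real.rpow_le_rpow (le_of_lt (Real.rpow_pos_of_pos (by norm_num) _)) hn1 (le_of_lt hc0)
    rwa [← Real.rpow_mul (by norm_num : (0:ℝ) ≤ 2), one_div_mul_cancel (ne_of_gt hc0),
      Real.rpow_one] at h2
  have hA1 : ∀ s : TLState n, ¬ ((zeros s.2 : ℝ) < (n:ℝ)^c) → 2 ≤ zeros s.2 := by
    intro s hs
    have h := not_lt.1 hs
    have h' : (2:ℝ) ≤ (zeros s.2 : ℝ) := le_trans h2c h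
    exact_mod_cast h'
  have hA2 : ∀ t : TLState n, zeros t.2 ≤ 1 → ((zeros t.2 : ℝ) < (n:ℝ)^c) := by
    intro t ht
    have h1 : ((zeros t.2 : ℕ) : ℝ) ≤ 1 := by exact_mod_cast ht
    linarith
  have hw0 : w ≤ 0 := le_trans hw2 (by norm_num)
  have hlogb : 1 ≤ Real.logb 2 n := by
    have h2R : (2:ℝ) ≤ (n:ℝ) := by
      have : (2:ℕ) ≤ n := h2n
      exact_mod_cast this
    calc (1:ℝ) = Real.logb 2 2 := (Real.logb_self_eq_one (by norm_num)).symm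
      _ ≤ Real.logb 2 n := Real.logb_le_logb_of_le (by norm_num) (by norm_num) h2R
  intro P hP
  rcases hP with rfl | hP
  · -- (1+1) EA
    apply Stmt7Aux.master hn4 hlogb hb2
    intro s
    apply Stmt7Aux.fhip_le hρ0
    · intro s' t
      exact Stmt7Aux.tlTrans_nonneg (Stmt7Aux.mutEA_nonneg h1n) s' t
    · intro s'
      exact Stmt7Aux.tlTrans_rowsum (fun x => le_of_eq (Stmt7Aux.sum_mutEA x)) s'
    · intro s' hs'
      exact Stmt7Aux.keyEA h2n hw0 hA1 hA2 hs'
  · -- RLS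
    have hPeq : P = transRLS (n := n) w := by simpa using hP
    subst hPeq
    apply Stmt7Aux.master hn4 hlogb hb2
    intro s
    apply Stmt7Aux.fhip_le hρ0
    · intro s' t
      exact Stmt7Aux.tlTrans_nonneg (fun x y => Stmt7Aux.mutRLS_nonneg x y) s' t
    · intro s'
      exact Stmt7Aux.tlTrans_rowsum (Stmt7Aux.sum_mutRLS h1n) s'
    · intro s' hs'
      exact Stmt7Aux.keyRLS h2n hA1 hs'
end

section
/- Let c ∈ (0, 1/2) and let w ∈ ℤ with −n ≤ w ≤ −1. Suppose the time-linkage RLS or (1+1) EA on f_w, without having reached the global optimum, arrives for the first time at a state in which the number of zero-bits of the current solution is below n^c, and that this state (x',x) satisfies x'_1 = 1 and x_1 = 1. Then with probability at least 1 − 1/n^{1−2c} − (n−1)·e^{−n^c/e}, Event II occurs at some later time of the run. -/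
open scoped Classical BigOperators ENNReal

section Aux
open Finset

variable {n : ℕ}

lemma aux_ones_add_zeros (x : BitStr n) : ones x + zeros x = n := by
  classical
  have := Finset.card_filter_add_card_filter_not (s := (Finset.univ : Finset (Fin n)))
    (p := fun i => x i = true)
  simpa [ones, zeros, Finset.card_univ] using this

lemma aux_ones_le (x : BitStr n) : ones x ≤ n := by
  have := aux_ones_add_zeros x; omega

lemma aux_zeros_eq_zero {x : BitStr n} (h : zeros x = 0) : x = allOnes n := by
  classical
  have h' : (Finset.univ.filter fun i => x i = false) = ∅ := by
    simpa [zeros, Finset.card_eq_zero] using h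
  funext i
  by_contra hi
  have hxi : x i = false := by
    cases hxi : x i with
    | false => rfl
    | true => exact absurd (by simp [allOnes, hxi]) hi
  have : i ∈ (Finset.univ.filter fun i => x i = false) := by simp [hxi]
  simp [h'] at this

lemma aux_ones_allOnes : ones (allOnes n) = n := by
  simp [ones, allOnes, Finset.card_univ]

lemma aux_zeros_le_zeros {x y : BitStr n} (h : ones x ≤ ones y) : zeros y ≤ zeros x := by
  have hx := aux_ones_add_zeros x
  have hy := aux_ones_add_zeros y
  omega

lemma aux_ones_update {x : BitStr n} {i : Fin n} (h : x i = false) :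
    ones (Function.update x i true) = ones x + 1 := by
  classical
  have hset : (Finset.univ.filter fun l => Function.update x i true l = true)
      = insert i (Finset.univ.filter fun l => x l = true) := by
    ext l
    by_cases hl : l = i
    · subst hl; simp [Function.update_self]
    · simp [Function.update_of_ne hl, hl]
  have hnot : i ∉ (Finset.univ.filter fun l => x l = true) := by simp [h]
  rw [ones, hset, Finset.card_insert_of_notMem hnot, ones, Nat.add_comm]

lemma aux_zeros_update {x : BitStr n} {i : Fin n} (h : x i = false) :
    zeros (Function.update x i true) + 1 = zeros x := by
  have h1 := aux_ones_add_zeros x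
  have h2 := aux_ones_add_zeros (Function.update x i true)
  have h3 := aux_ones_update h
  omega

lemma aux_zeros_pos {x : BitStr n} {i : Fin n} (h : x i = false) : 1 ≤ zeros x := by
  classical
  have : i ∈ (Finset.univ.filter fun l => x l = false) := by simp [h]
  have := Finset.card_pos.mpr ⟨i, this⟩
  simpa [zeros] using this

end Aux
section Aux2
open Finset

variable {n : ℕ}

lemma aux_sum_prod_bool (g : Fin n → Bool → ℝ) :
    ∑ y : BitStr n, ∏ i, g i (y i) = ∏ i, (g i false + g i true) := by
  classical
  have h := Finset.prod_univ_sum (fun _ : Fin n => (Finset.univ : Finset Bool)) g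
  rw [Fintype.piFinset_univ] at h
  rw [← h]
  apply Finset.prod_congr rfl
  intro i _
  rw [Fintype.sum_bool]
  ring

lemma aux_mutEA_eq_prod (x y : BitStr n) :
    mutEA x y = ∏ i, (if x i ≠ y i then (1 / n : ℝ) else 1 - 1 / n) := by
  classical
  rw [Finset.prod_ite (f := fun _ => (1/n:ℝ)) (g := fun _ => 1 - 1/(n:ℝ))]
  rw [Finset.prod_const, Finset.prod_const]
  have hcard : (Finset.univ.filter fun i => ¬ x i ≠ y i).card = n - hamming x y := by
    have h0 := Finset.card_filter_add_card_filter_not (s := (Finset.univ : Finset (Fin n)))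
      (p := fun i => x i ≠ y i)
    simp only [Finset.card_univ, Fintype.card_fin] at h0
    have h1 : hamming x y + (Finset.univ.filter fun i => ¬ x i ≠ y i).card = n := h0
    omega
  rw [hcard]
  rfl

lemma aux_mutEA_nonneg (x y : BitStr n) : 0 ≤ mutEA x y := by
  rcases Nat.eq_zero_or_pos n with h | h
  · subst h; simp [mutEA]
  · have h1 : (0:ℝ) ≤ 1/n := by positivity
    have h2 : (0:ℝ) ≤ 1 - 1/n := by
      have : (1:ℝ) ≤ n := by exact_mod_cast h
      have : (1:ℝ)/n ≤ 1 := by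
        rw [div_le_one (by positivity)]; exact this
      linarith
    exact mul_nonneg (pow_nonneg h1 _) (pow_nonneg h2 _)

lemma aux_sum_mutEA (x : BitStr n) : ∑ y : BitStr n, mutEA x y = 1 := by
  classical
  have : ∑ y : BitStr n, mutEA x y
      = ∑ y : BitStr n, ∏ i, (if x i ≠ y i then (1 / n : ℝ) else 1 - 1 / n) := by
    apply Finset.sum_congr rfl; intro y _; exact aux_mutEA_eq_prod x y
  rw [this]
  have h := aux_sum_prod_bool (fun i b => if x i ≠ b then (1 / n : ℝ) else 1 - 1 / n)
  rw [h]
  have : ∀ i : Fin n,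
      ((if x i ≠ false then (1 / n : ℝ) else 1 - 1 / n)
        + (if x i ≠ true then (1 / n : ℝ) else 1 - 1 / n)) = 1 := by
    intro i; cases hxi : x i <;> simp [hxi] <;> ring
  rw [Finset.prod_congr rfl (fun i _ => this i)]
  simp

lemma aux_sum_mutEA_twoflip (x : BitStr n) (i j : Fin n) (hij : i ≠ j) :
    ∑ y : BitStr n, (if y i ≠ x i ∧ y j ≠ x j then mutEA x y else 0) = 1 / (n:ℝ)^2 := by
  classical
  set g' : Fin n → Bool → ℝ := fun l b =>
    if (l = i ∨ l = j) ∧ b = x l then 0 else (if x l ≠ b then (1 / n : ℝ) else 1 - 1 / n)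
    with hg'
  have hpt : ∀ y : BitStr n,
      (if y i ≠ x i ∧ y j ≠ x j then mutEA x y else 0) = ∏ l, g' l (y l) := by
    intro y
    by_cases hy : y i ≠ x i ∧ y j ≠ x j
    · rw [if_pos hy, aux_mutEA_eq_prod]
      apply Finset.prod_congr rfl
      intro l _
      have hguard : ¬((l = i ∨ l = j) ∧ y l = x l) := by
        rintro ⟨hl, hbl⟩
        rcases hl with rfl | rfl
        · exact hy.1 hbl
        · exact hy.2 hbl
      simp only [hg', if_neg hguard]
    · rw [if_neg hy]
      rw [not_and_or] at hy
      have : ∃ l₀, (l₀ = i ∨ l₀ = j) ∧ y l₀ = x l₀ := by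
        rcases hy with h | h
        · exact ⟨i, Or.inl rfl, not_not.mp h⟩
        · exact ⟨j, Or.inr rfl, not_not.mp h⟩
      obtain ⟨l₀, hl₀, hyl₀⟩ := this
      symm
      apply Finset.prod_eq_zero (Finset.mem_univ l₀)
      rw [hg']; simp only []
      rw [if_pos ⟨hl₀, hyl₀⟩]
  rw [Finset.sum_congr rfl (fun y _ => hpt y), aux_sum_prod_bool]
  have hval : ∀ l : Fin n, (g' l false + g' l true)
      = (if l = i ∨ l = j then (1/n : ℝ) else 1) := by
    intro l
    simp only [hg']
    by_cases hl : l = i ∨ l = j <;> cases hxl : x l <;> simp [hl] <;> ring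
  rw [Finset.prod_congr rfl (fun l _ => hval l)]
  rw [Finset.prod_ite (f := fun _ => (1/n:ℝ)) (g := fun _ => (1:ℝ))]
  rw [Finset.prod_const, Finset.prod_const, one_pow, mul_one]
  have hfil : (Finset.univ.filter fun l : Fin n => l = i ∨ l = j) = {i, j} := by
    ext l; simp
  rw [hfil, Finset.card_insert_of_notMem (by simp [hij]), Finset.card_singleton]
  rw [div_pow, one_pow]

end Aux2
section Aux3
open Finset

variable {n : ℕ}

lemma aux_hamming_update (x : BitStr n) (i : Fin n) {b : Bool} (hb : x i ≠ b) :
    hamming x (Function.update x i b) = 1 := by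
  classical
  have hset : (Finset.univ.filter fun l => x l ≠ Function.update x i b l) = {i} := by
    ext l
    by_cases hl : l = i
    · subst hl; simp [Function.update_self, hb]
    · simp [Function.update_of_ne hl, hl]
  rw [hamming, hset, Finset.card_singleton]

lemma aux_eu_ge_two : (2:ℝ) ≤ eu := by
  have := Real.add_one_le_exp (1:ℝ)
  rw [eu]; linarith

lemma aux_eu_pos : (0:ℝ) < eu := lt_of_lt_of_le (by norm_num) aux_eu_ge_two

lemma aux_exp_neg_one_le (hn : 1 ≤ n) : Real.exp (-1) ≤ (1 - 1/(n:ℝ))^(n-1) := by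
  rcases Nat.lt_or_ge n 2 with h2 | h2
  · have hn1 : n = 1 := by omega
    subst hn1
    simp only [Nat.sub_self, pow_zero]
    calc Real.exp (-1) ≤ Real.exp 0 := Real.exp_le_exp.mpr (by norm_num)
    _ = 1 := Real.exp_zero
  · set m : ℕ := n - 1 with hm
    have hm1 : 1 ≤ m := by omega
    have hmR : (1:ℝ) ≤ m := by exact_mod_cast hm1
    have hmpos : (0:ℝ) < m := by linarith
    have hnm : (n:ℝ) = (m:ℝ) + 1 := by
      have : n = m + 1 := by omega
      exact_mod_cast this
    have h1 : (1:ℝ) + 1/m ≤ Real.exp (1/m) := by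
      have := Real.add_one_le_exp (1/(m:ℝ)); linarith
    have h2' : Real.exp (-(1/(m:ℝ))) ≤ 1/(1 + 1/(m:ℝ)) := by
      rw [Real.exp_neg, inv_eq_one_div]
      exact one_div_le_one_div_of_le (by positivity) h1
    have h3 : (1:ℝ)/(1 + 1/(m:ℝ)) = 1 - 1/(n:ℝ) := by
      rw [hnm]
      field_simp
      ring
    have h4 : Real.exp (-1) = (Real.exp (-(1/(m:ℝ))))^m := by
      rw [← Real.exp_nat_mul]
      congr 1
      field_simp
    rw [h4]
    exact pow_le_pow_left₀ (Real.exp_pos _).le (h2'.trans_eq h3) m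

lemma aux_mutEA_solo (hn : 1 ≤ n) (x : BitStr n) (i : Fin n) (h : x i = false) :
    1/(eu*(n:ℝ)) ≤ mutEA x (Function.update x i true) := by
  have hham := aux_hamming_update x i (b := true) (by simp [h])
  rw [mutEA, hham, pow_one]
  have hbound := aux_exp_neg_one_le hn
  have heq : Real.exp (-1) = 1/eu := by
    rw [Real.exp_neg, eu, inv_eq_one_div]
  have hnpos : (0:ℝ) < n := by exact_mod_cast hn
  calc 1/(eu*(n:ℝ)) = (1/n) * (1/eu) := by
        rw [one_div_mul_one_div]; ring_nf
  _ ≤ (1/n) * (1 - 1/(n:ℝ))^(n-1) := by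
        apply mul_le_mul_of_nonneg_left _ (by positivity)
        rw [← heq]; exact hbound

lemma aux_mutRLS_solo (hn : 1 ≤ n) (x : BitStr n) (i : Fin n) (h : x i = false) :
    1/(eu*(n:ℝ)) ≤ mutRLS x (Function.update x i true) := by
  have hham := aux_hamming_update x i (b := true) (by simp [h])
  rw [mutRLS, if_pos hham]
  have hnpos : (0:ℝ) < n := by exact_mod_cast hn
  exact one_div_le_one_div_of_le hnpos (by nlinarith [aux_eu_ge_two])

lemma aux_mutRLS_nonneg (x y : BitStr n) : 0 ≤ mutRLS x y := by
  rw [mutRLS]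
  split <;> positivity

lemma aux_sum_mutRLS (hn : 1 ≤ n) (x : BitStr n) : ∑ y : BitStr n, mutRLS x y = 1 := by
  classical
  have hinj : Function.Injective (fun i : Fin n => Function.update x i (!(x i))) := by
    intro i j hEq
    by_contra hne
    have h1 := congrFun hEq i
    simp only [Function.update_self] at h1
    rw [Function.update_of_ne hne] at h1
    exact (Bool.not_ne_self (x i)) h1
  have hsum : ∑ y : BitStr n, mutRLS x y
      = ((Finset.univ.filter fun y : BitStr n => hamming x y = 1).card : ℝ) * (1/n) := by
    simp only [mutRLS]
    rw [Finset.sum_ite, Finset.sum_const, Finset.sum_const_zero, add_zero, nsmul_eq_mul]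
  have hset : (Finset.univ.filter fun y : BitStr n => hamming x y = 1)
      = Finset.univ.image (fun i : Fin n => Function.update x i (!(x i))) := by
    ext y
    simp only [Finset.mem_filter, Finset.mem_univ, true_and, Finset.mem_image]
    constructor
    · intro hy
      rw [hamming] at hy
      obtain ⟨i, hfi⟩ := Finset.card_eq_one.mp hy
      refine ⟨i, ?_⟩
      funext l
      by_cases hl : l = i
      · subst hl
        rw [Function.update_self]
        have hmem : l ∈ ({l} : Finset (Fin n)) := Finset.mem_singleton_self l
        rw [← hfi] at hmem
        simp only [Finset.mem_filter, Finset.mem_univ, true_and] at hmem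
        cases hxi : x l <;> cases hyi : y l <;> simp [hxi, hyi] at hmem ⊢
      · rw [Function.update_of_ne hl]
        have hmem : l ∉ ({i} : Finset (Fin n)) := by simp [hl]
        rw [← hfi] at hmem
        simp only [Finset.mem_filter, Finset.mem_univ, true_and, not_not] at hmem
        exact hmem
    · rintro ⟨i, rfl⟩
      exact aux_hamming_update x i (Ne.symm (Bool.not_ne_self (x i)))
  rw [hsum, hset, Finset.card_image_of_injective _ hinj, Finset.card_univ, Fintype.card_fin]
  have hnpos : (0:ℝ) < n := by exact_mod_cast hn
  field_simp

end Aux3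
section Aux4
open Finset

variable {n : ℕ}

lemma aux_tlTrans_nonneg (m : BitStr n → BitStr n → ℝ) (hm0 : ∀ x y, 0 ≤ m x y)
    (w : ℤ) (s t : TLState n) : 0 ≤ tlTrans m w s t := by
  classical
  rw [tlTrans]
  apply add_nonneg
  · apply Finset.sum_nonneg
    intro y _
    split
    · exact hm0 _ _
    · exact le_rfl
  · split
    · apply Finset.sum_nonneg
      intro y _
      split
      · exact hm0 _ _
      · exact le_rfl
    · exact le_rfl

lemma aux_tlTrans_rowsum (m : BitStr n → BitStr n → ℝ)
    (hm1 : ∀ x, ∑ y : BitStr n, m x y = 1) (w : ℤ) (s : TLState n) :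
    ∑ t : TLState n, tlTrans m w s t = 1 := by
  classical
  simp only [tlTrans]
  rw [Finset.sum_add_distrib]
  have hA : ∑ t : TLState n, (∑ y : BitStr n,
      if fW w s.1 s.2 ≤ fW w s.2 y ∧ t = (s.2, y) then m s.2 y else 0)
      = ∑ y : BitStr n, (if fW w s.1 s.2 ≤ fW w s.2 y then m s.2 y else 0) := by
    rw [Finset.sum_comm]
    apply Finset.sum_congr rfl
    intro y _
    by_cases hC : fW w s.1 s.2 ≤ fW w s.2 y
    · simp only [hC, true_and]
      rw [Finset.sum_ite_eq' Finset.univ ((s.2, y) : TLState n) (fun _ => m s.2 y)]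
      simp [hC]
    · simp [hC]
  have hB : ∑ t : TLState n, (if t = s then
      (∑ y : BitStr n, if ¬ fW w s.1 s.2 ≤ fW w s.2 y then m s.2 y else 0) else 0)
      = ∑ y : BitStr n, (if ¬ fW w s.1 s.2 ≤ fW w s.2 y then m s.2 y else 0) := by
    rw [Finset.sum_ite_eq' Finset.univ s]
    simp
  rw [hA, hB, ← Finset.sum_add_distrib]
  rw [← hm1 s.2]
  apply Finset.sum_congr rfl
  intro y _
  by_cases hC : fW w s.1 s.2 ≤ fW w s.2 y <;> simp [hC]

lemma aux_tlTrans_succ {m : BitStr n → BitStr n → ℝ} {w : ℤ} {s u : TLState n}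
    (h : tlTrans m w s u ≠ 0) :
    u = s ∨ ∃ y : BitStr n, fW w s.1 s.2 ≤ fW w s.2 y ∧ u = (s.2, y) := by
  classical
  rw [tlTrans] at h
  by_cases hB : (if u = s then
      (∑ y : BitStr n, if ¬ fW w s.1 s.2 ≤ fW w s.2 y then m s.2 y else 0) else 0) = 0
  · have hA : (∑ y : BitStr n,
        if fW w s.1 s.2 ≤ fW w s.2 y ∧ u = (s.2, y) then m s.2 y else 0) ≠ 0 := by
      intro h0
      exact h (by rw [h0, hB, add_zero])
    obtain ⟨y, _, hy⟩ := Finset.exists_ne_zero_of_sum_ne_zero hA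
    by_cases hcond : fW w s.1 s.2 ≤ fW w s.2 y ∧ u = (s.2, y)
    · exact Or.inr ⟨y, hcond⟩
    · rw [if_neg hcond] at hy
      exact absurd rfl hy
  · by_cases hu : u = s
    · exact Or.inl hu
    · rw [if_neg hu] at hB
      exact absurd rfl hB

lemma aux_tlTrans_single (m : BitStr n → BitStr n → ℝ) (hm0 : ∀ x y, 0 ≤ m x y)
    (w : ℤ) (s : TLState n) (y₀ : BitStr n) (hacc : fW w s.1 s.2 ≤ fW w s.2 y₀) :
    m s.2 y₀ ≤ tlTrans m w s (s.2, y₀) := by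
  classical
  rw [tlTrans]
  have h1 : m s.2 y₀ ≤ ∑ y : BitStr n,
      (if fW w s.1 s.2 ≤ fW w s.2 y ∧ ((s.2, y₀) : TLState n) = (s.2, y) then m s.2 y else 0) := by
    have := Finset.single_le_sum (f := fun y : BitStr n =>
      if fW w s.1 s.2 ≤ fW w s.2 y ∧ ((s.2, y₀) : TLState n) = (s.2, y) then m s.2 y else 0)
      (s := Finset.univ) ?_ (Finset.mem_univ y₀)
    · simpa [hacc] using this
    · intro i _
      split
      · exact hm0 _ _
      · exact le_rfl
  refine h1.trans ?_
  apply le_add_of_nonneg_right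
  split
  · apply Finset.sum_nonneg
    intro y _
    split
    · exact hm0 _ _
    · exact le_rfl
  · exact le_rfl

end Aux4
section Aux5
open Finset

variable {n : ℕ}

lemma aux_hitWithin_nonneg (P : TLState n → TLState n → ℝ)
    (hP0 : ∀ s t, 0 ≤ P s t) (E : TLState n → Prop) :
    ∀ T s, 0 ≤ hitWithin P E T s := by
  intro T
  induction T with
  | zero =>
    intro s
    rw [hitWithin]
    split
    · exact zero_le_one
    · exact le_rfl
  | succ T ih =>
    intro s
    rw [hitWithin]
    split
    · exact zero_le_one
    · exact Finset.sum_nonneg fun t _ => mul_nonneg (hP0 _ _) (ih t)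

lemma aux_hitWithin_le_one (P : TLState n → TLState n → ℝ)
    (hP0 : ∀ s t, 0 ≤ P s t) (hP1 : ∀ s, ∑ t : TLState n, P s t = 1)
    (E : TLState n → Prop) :
    ∀ T s, hitWithin P E T s ≤ 1 := by
  intro T
  induction T with
  | zero =>
    intro s
    rw [hitWithin]
    split
    · exact le_rfl
    · exact zero_le_one
  | succ T ih =>
    intro s
    rw [hitWithin]
    split
    · exact le_rfl
    · calc ∑ t : TLState n, P s t * hitWithin P E T t
          ≤ ∑ t : TLState n, P s t * 1 := by
            apply Finset.sum_le_sum
            intro t _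
            exact mul_le_mul_of_nonneg_left (ih t) (hP0 _ _)
      _ = 1 := by
            simp only [mul_one]
            exact hP1 s

lemma aux_hitWithin_of_event (P : TLState n → TLState n → ℝ) (E : TLState n → Prop)
    {s : TLState n} (hs : E s) : ∀ T, hitWithin P E T s = 1 := by
  intro T
  cases T with
  | zero => rw [hitWithin, if_pos hs]
  | succ T => rw [hitWithin, if_pos hs]

/-- The key inductive failure bound. -/
lemma aux_lemmaA (P : TLState n → TLState n → ℝ)
    (hP0 : ∀ s t, 0 ≤ P s t) (hP1 : ∀ s, ∑ t : TLState n, P s t = 1)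
    (β r : ℝ) (hβ : 0 ≤ β) (hr0 : 0 ≤ r) (hr1 : r ≤ 1)
    (GP : TLState n → Prop)
    (hEv : ∀ t, GP t → ¬ EventII t → 1 ≤ zeros t.2)
    (H1 : ∀ t, GP t → ¬ EventII t →
      ∑ u : TLState n, (if GP u then 0 else P t u) ≤ β * (zeros t.2 : ℝ))
    (H2 : ∀ t, GP t → ¬ EventII t →
      ∑ u : TLState n, P t u * (zeros u.2 : ℝ) ≤ (1 - r) * (zeros t.2 : ℝ)) :
    ∀ T t, GP t →
      1 - hitWithin P (EventII (n := n)) T t ≤ (zeros t.2 : ℝ) * (T * β + (1 - r)^T) := by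
  intro T
  induction T with
  | zero =>
    intro t hGP
    by_cases hE : EventII t
    · rw [hitWithin, if_pos hE]
      have h1r : (0:ℝ) ≤ 1 - r := by linarith
      have : (0:ℝ) ≤ (zeros t.2 : ℝ) * (((0:ℕ):ℝ) * β + (1-r)^0) :=
        mul_nonneg (Nat.cast_nonneg _)
          (add_nonneg (mul_nonneg (Nat.cast_nonneg _) hβ) (pow_nonneg h1r _))
      simpa using this
    · rw [hitWithin, if_neg hE]
      have h1 : (1:ℝ) ≤ (zeros t.2 : ℝ) := by exact_mod_cast hEv t hGP hE
      simpa using h1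
  | succ T ih =>
    intro t hGP
    by_cases hE : EventII t
    · rw [aux_hitWithin_of_event P _ hE]
      have h1r : (0:ℝ) ≤ 1 - r := by linarith
      have : (0:ℝ) ≤ (zeros t.2 : ℝ) * (((T+1 : ℕ):ℝ) * β + (1-r)^(T+1)) :=
        mul_nonneg (Nat.cast_nonneg _)
          (add_nonneg (mul_nonneg (Nat.cast_nonneg _) hβ) (pow_nonneg h1r _))
      simpa using this
    · rw [hitWithin, if_neg hE]
      set k : ℝ := (zeros t.2 : ℝ) with hk
      set C : ℝ := (T : ℝ) * β + (1 - r)^T with hC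
      have h1r : (0:ℝ) ≤ 1 - r := by linarith
      have hCnn : 0 ≤ C := by positivity
      have hknn : (0:ℝ) ≤ k := by positivity
      have hstep : 1 - ∑ u : TLState n, P t u * hitWithin P EventII T u
          = ∑ u : TLState n, P t u * (1 - hitWithin P EventII T u) := by
        have heq : ∑ u : TLState n, P t u * (1 - hitWithin P EventII T u)
            = ∑ u : TLState n, (P t u - P t u * hitWithin P EventII T u) := by
          apply Finset.sum_congr rfl
          intro u _
          ring
        rw [heq, Finset.sum_sub_distrib, hP1 t]
      rw [hstep]
      have hsplit : ∑ u : TLState n, P t u * (1 - hitWithin P EventII T u)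
          = (∑ u : TLState n, (if GP u then P t u * (1 - hitWithin P EventII T u) else 0))
          + (∑ u : TLState n, (if GP u then 0 else P t u * (1 - hitWithin P EventII T u))) := by
        rw [← Finset.sum_add_distrib]
        apply Finset.sum_congr rfl
        intro u _
        by_cases hu : GP u <;> simp [hu]
      rw [hsplit]
      have hb1a : (∑ u : TLState n, (if GP u then P t u * (1 - hitWithin P EventII T u) else 0))
          ≤ ∑ u : TLState n, P t u * ((zeros u.2 : ℝ) * C) := by
        apply Finset.sum_le_sum
        intro u _
        by_cases hu : GP u
        · rw [if_pos hu]
          exact mul_le_mul_of_nonneg_left (ih u hu) (hP0 t u)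
        · rw [if_neg hu]
          exact mul_nonneg (hP0 t u) (mul_nonneg (Nat.cast_nonneg _) hCnn)
      have hb1b : ∑ u : TLState n, P t u * ((zeros u.2 : ℝ) * C)
          = C * ∑ u : TLState n, P t u * (zeros u.2 : ℝ) := by
        rw [Finset.mul_sum]
        apply Finset.sum_congr rfl
        intro u _
        ring
      have hb1c : C * ∑ u : TLState n, P t u * (zeros u.2 : ℝ) ≤ C * ((1-r) * k) := by
        apply mul_le_mul_of_nonneg_left _ hCnn
        rw [← hk] at *
        exact H2 t hGP hE
      have hb1 : (∑ u : TLState n, (if GP u then P t u * (1 - hitWithin P EventII T u) else 0))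
          ≤ C * ((1-r) * k) := by
        refine hb1a.trans ?_
        rw [hb1b]
        exact hb1c
      have hb2a : (∑ u : TLState n, (if GP u then 0 else P t u * (1 - hitWithin P EventII T u)))
          ≤ ∑ u : TLState n, (if GP u then 0 else P t u) := by
        apply Finset.sum_le_sum
        intro u _
        by_cases hu : GP u
        · simp [hu]
        · rw [if_neg hu, if_neg hu]
          nlinarith [mul_nonneg (hP0 t u) (aux_hitWithin_nonneg P hP0 EventII T u)]
      have hb2 : (∑ u : TLState n, (if GP u then 0 else P t u * (1 - hitWithin P EventII T u)))
          ≤ β * k := hb2a.trans (H1 t hGP hE)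
      have hfin : C * ((1-r)*k) + β * k ≤ k * (((T+1 : ℕ) : ℝ) * β + (1-r)^(T+1)) := by
        rw [hC, pow_succ]
        push_cast
        have hTnn : (0:ℝ) ≤ (T:ℝ) := Nat.cast_nonneg T
        nlinarith [mul_nonneg (mul_nonneg (mul_nonneg hknn hTnn) hβ) hr0]
      linarith [hb1, hb2, hfin]

end Aux5
section Aux6
open Finset

variable {n : ℕ}

lemma aux_firstBit (hn : 0 < n) (x : BitStr n) : firstBit x = x ⟨0, hn⟩ := dif_pos hn

lemma aux_accept_iff {t : TLState n} {w : ℤ} {y : BitStr n}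
    (h1 : firstBit t.1 = true) (h2 : firstBit t.2 = true) :
    (fW w t.1 t.2 ≤ fW w t.2 y) ↔ ones t.2 ≤ ones y := by
  have e1 : fW w t.1 t.2 = (ones t.2 : ℤ) + w := by rw [fW, h1]; simp
  have e2 : fW w t.2 y = (ones y : ℤ) + w := by rw [fW, h2]; simp
  rw [e1, e2]
  omega

lemma aux_badwitness (hn : 0 < n) {x y : BitStr n}
    (hx0 : x ⟨0, hn⟩ = true) (hy0 : y ⟨0, hn⟩ = false) (hones : ones x ≤ ones y) :
    ∃ i, x i = false ∧ y i ≠ x i := by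
  classical
  by_contra hcon
  push_neg at hcon
  have hsub : (Finset.univ.filter fun i => y i = true)
      ⊂ (Finset.univ.filter fun i => x i = true) := by
    constructor
    · intro i hi
      simp only [Finset.mem_filter, Finset.mem_univ, true_and] at hi ⊢
      by_contra hxi
      have hxf : x i = false := by
        cases hx : x i
        · rfl
        · exact absurd hx hxi
      have := hcon i hxf
      rw [this, hxf] at hi
      exact Bool.false_ne_true hi
    · intro hsub'
      have h0x : (⟨0, hn⟩ : Fin n) ∈ Finset.univ.filter fun i => x i = true := by
        simp [hx0]
      have h0y := hsub' h0x
      simp only [Finset.mem_filter, Finset.mem_univ, true_and] at h0y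
      rw [hy0] at h0y
      exact Bool.false_ne_true h0y
  have := Finset.card_lt_card hsub
  rw [ones, ones] at hones
  omega

lemma aux_mutRLS_twoflip (x : BitStr n) (i j : Fin n) (hij : i ≠ j) :
    ∑ y : BitStr n, (if y i ≠ x i ∧ y j ≠ x j then mutRLS x y else 0) ≤ 1 / (n:ℝ)^2 := by
  classical
  have hzero : ∀ y : BitStr n, (if y i ≠ x i ∧ y j ≠ x j then mutRLS x y else 0) = 0 := by
    intro y
    by_cases hc : y i ≠ x i ∧ y j ≠ x j
    · rw [if_pos hc, mutRLS, if_neg]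
      intro hham
      have hsub : ({i, j} : Finset (Fin n)) ⊆ Finset.univ.filter fun l => x l ≠ y l := by
        intro l hl
        simp only [Finset.mem_insert, Finset.mem_singleton] at hl
        rcases hl with rfl | rfl
        · simp only [Finset.mem_filter, Finset.mem_univ, true_and]
          exact fun h => hc.1 h.symm
        · simp only [Finset.mem_filter, Finset.mem_univ, true_and]
          exact fun h => hc.2 h.symm
      have hcard := Finset.card_le_card hsub
      rw [Finset.card_insert_of_notMem (by simp [hij]), Finset.card_singleton] at hcard
      rw [hamming] at hham
      omega
    · rw [if_neg hc]
  rw [Finset.sum_congr rfl (fun y _ => hzero y)]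
  simp


lemma aux_mutEA_twoflip_le (x : BitStr n) (i j : Fin n) (hij : i ≠ j) :
    ∑ y : BitStr n, (if y i ≠ x i ∧ y j ≠ x j then mutEA x y else 0) ≤ 1 / (n:ℝ)^2 :=
  le_of_eq (aux_sum_mutEA_twoflip x i j hij)

/-- H1: escape probability from the good region is at most `zeros/n²`. -/
lemma aux_H1 (hn : 0 < n) (m : BitStr n → BitStr n → ℝ)
    (hm0 : ∀ x y, 0 ≤ m x y)
    (hbad : ∀ (x : BitStr n) (i j : Fin n), i ≠ j →
      ∑ y : BitStr n, (if y i ≠ x i ∧ y j ≠ x j then m x y else 0) ≤ 1 / (n:ℝ)^2)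
    (w : ℤ) (K : ℕ) (t : TLState n)
    (ht1 : firstBit t.1 = true) (ht2 : firstBit t.2 = true) (htK : zeros t.2 ≤ K) :
    ∑ u : TLState n, (if (firstBit u.1 = true ∧ firstBit u.2 = true ∧ zeros u.2 ≤ K)
        then 0 else tlTrans m w t u)
      ≤ (1/(n:ℝ)^2) * (zeros t.2 : ℝ) := by
  classical
  set GP : TLState n → Prop :=
    fun u => firstBit u.1 = true ∧ firstBit u.2 = true ∧ zeros u.2 ≤ K with hGP
  set x : BitStr n := t.2 with hx
  set z0 : Fin n := ⟨0, hn⟩ with hz0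
  have hx0 : x z0 = true := by rw [hz0, ← aux_firstBit hn x]; exact ht2
  have hGPt : GP t := ⟨ht1, ht2, htK⟩
  -- Step A+B+C : reduce to a sum over offspring y
  have hstepC : ∑ u : TLState n, (if GP u then 0 else tlTrans m w t u)
      = ∑ y : BitStr n,
          (if (fW w t.1 t.2 ≤ fW w t.2 y ∧ ¬ GP (x, y)) then m x y else 0) := by
    have hptw : ∀ u : TLState n, (if GP u then 0 else tlTrans m w t u)
        = ∑ y : BitStr n, (if GP u then 0 else
            (if fW w t.1 t.2 ≤ fW w t.2 y ∧ u = (t.2, y) then m t.2 y else 0)) := by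
      intro u
      by_cases hu : GP u
      · simp only [if_pos hu, Finset.sum_const_zero]
      · simp only [if_neg hu]
        rw [tlTrans]
        have hB : (if u = t then
            (∑ y : BitStr n, if ¬ fW w t.1 t.2 ≤ fW w t.2 y then m t.2 y else 0) else 0) = 0 := by
          rw [if_neg]
          intro hut
          exact hu (hut ▸ hGPt)
        rw [hB, add_zero]
    rw [Finset.sum_congr rfl (fun u _ => hptw u), Finset.sum_comm]
    apply Finset.sum_congr rfl
    intro y _
    have hptw2 : ∀ u : TLState n, (if GP u then 0 else
        (if fW w t.1 t.2 ≤ fW w t.2 y ∧ u = (t.2, y) then m t.2 y else 0))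
        = (if u = ((t.2, y) : TLState n) then
            (if (fW w t.1 t.2 ≤ fW w t.2 y ∧ ¬ GP ((t.2, y) : TLState n)) then m t.2 y else 0)
          else 0) := by
      intro u
      by_cases hu : u = ((t.2, y) : TLState n)
      · subst hu
        by_cases hg : GP ((t.2, y) : TLState n) <;>
          by_cases hacc : fW w t.1 t.2 ≤ fW w t.2 y <;>
          simp [hg, hacc]
      · by_cases hg : GP u <;> simp [hg, hu]
    rw [Finset.sum_congr rfl (fun u _ => hptw2 u),
      Finset.sum_ite_eq' Finset.univ ((t.2, y) : TLState n)]
    simp [hx]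
  rw [hstepC]
  -- Step D : bound by pairwise flip sums
  set Z : Finset (Fin n) := Finset.univ.filter (fun i => x i = false) with hZ
  have hzK : Z.card = zeros x := rfl
  have hD : ∑ y : BitStr n,
        (if (fW w t.1 t.2 ≤ fW w t.2 y ∧ ¬ GP (x, y)) then m x y else 0)
      ≤ ∑ y : BitStr n, ∑ i ∈ Z, (if y z0 ≠ x z0 ∧ y i ≠ x i then m x y else 0) := by
    apply Finset.sum_le_sum
    intro y _
    by_cases hcond : fW w t.1 t.2 ≤ fW w t.2 y ∧ ¬ GP (x, y)
    · rw [if_pos hcond]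
      obtain ⟨hacc, hnotGP⟩ := hcond
      have hones : ones x ≤ ones y := (aux_accept_iff ht1 ht2).mp hacc
      have hzy : zeros y ≤ K := le_trans (aux_zeros_le_zeros hones) htK
      have hfy : firstBit y = false := by
        rcases Bool.eq_false_or_eq_true (firstBit y) with hf | hf
        · exact absurd ⟨ht2, hf, hzy⟩ hnotGP
        · exact hf
      have hy0 : y z0 = false := by
        rw [hz0, ← aux_firstBit hn y]
        exact hfy
      obtain ⟨i, hif, hiy⟩ := aux_badwitness hn hx0 hy0 hones
      have hiZ : i ∈ Z := by simp [hZ, hif]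
      have := Finset.single_le_sum
        (f := fun i => (if y z0 ≠ x z0 ∧ y i ≠ x i then m x y else 0))
        (fun i _ => by split <;> [exact hm0 _ _; exact le_rfl]) hiZ
      refine le_trans ?_ this
      rw [if_pos (show y z0 ≠ x z0 ∧ y i ≠ x i from
        ⟨by rw [hy0, hx0]; exact Bool.false_ne_true, hiy⟩)]
    · rw [if_neg hcond]
      apply Finset.sum_nonneg
      intro i _
      split
      · exact hm0 _ _
      · exact le_rfl
  refine hD.trans ?_
  rw [Finset.sum_comm]
  have hE : ∀ i ∈ Z, ∑ y : BitStr n, (if y z0 ≠ x z0 ∧ y i ≠ x i then m x y else 0)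
      ≤ 1/(n:ℝ)^2 := by
    intro i hiZ
    apply hbad x z0 i
    intro hzi
    rw [← hzi] at hiZ
    simp only [hZ, Finset.mem_filter, Finset.mem_univ, true_and] at hiZ
    rw [hx0] at hiZ
    exact Bool.noConfusion hiZ
  calc ∑ i ∈ Z, ∑ y : BitStr n, (if y z0 ≠ x z0 ∧ y i ≠ x i then m x y else 0)
      ≤ ∑ i ∈ Z, 1/(n:ℝ)^2 := Finset.sum_le_sum hE
  _ = (Z.card : ℝ) * (1/(n:ℝ)^2) := by rw [Finset.sum_const, nsmul_eq_mul]
  _ = (1/(n:ℝ)^2) * (zeros t.2 : ℝ) := by rw [hzK]; ring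

end Aux6
section Aux7
open Finset

variable {n : ℕ}

/-- H2: multiplicative drift of the number of zeros. -/
lemma aux_H2 (hn : 0 < n) (m : BitStr n → BitStr n → ℝ)
    (hm0 : ∀ x y, 0 ≤ m x y) (hm1 : ∀ x, ∑ y : BitStr n, m x y = 1)
    (hsolo : ∀ (x : BitStr n) (i : Fin n), x i = false →
      1/(eu*(n:ℝ)) ≤ m x (Function.update x i true))
    (w : ℤ) (t : TLState n)
    (ht1 : firstBit t.1 = true) (ht2 : firstBit t.2 = true) :
    ∑ u : TLState n, tlTrans m w t u * (zeros u.2 : ℝ)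
      ≤ (1 - 1/(eu*(n:ℝ))) * (zeros t.2 : ℝ) := by
  classical
  set x : BitStr n := t.2 with hx
  set Z : Finset (Fin n) := Finset.univ.filter (fun i => x i = false) with hZ
  have hzK : Z.card = zeros x := rfl
  set S : Finset (TLState n) := Z.image (fun i => ((x, Function.update x i true) : TLState n))
    with hS
  have hinj : ∀ i ∈ Z, ∀ j ∈ Z,
      ((x, Function.update x i true) : TLState n) = (x, Function.update x j true) → i = j := by
    intro i hi j hj hEq
    by_contra hne
    have hif : x i = false := by simpa [hZ] using hi
    have h1 := congrFun (congrArg Prod.snd hEq) i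
    simp only [Function.update_self] at h1
    rw [Function.update_of_ne hne] at h1
    rw [← h1] at hif
    exact Bool.noConfusion hif
  have hptw : ∀ u : TLState n, tlTrans m w t u * (zeros u.2 : ℝ)
      ≤ tlTrans m w t u * (zeros x : ℝ) - (if u ∈ S then tlTrans m w t u else 0) := by
    intro u
    by_cases hu : u ∈ S
    · rw [if_pos hu]
      obtain ⟨i, hiZ, hfi⟩ := Finset.mem_image.mp hu
      have hif : x i = false := by simpa [hZ] using hiZ
      have hcast : (zeros (Function.update x i true) : ℝ) + 1 = (zeros x : ℝ) := by
        exact_mod_cast aux_zeros_update hif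
      rw [← hfi]
      dsimp only
      have hE : tlTrans m w t ((x, Function.update x i true) : TLState n)
            * ((zeros x : ℝ) - 1)
          = tlTrans m w t ((x, Function.update x i true) : TLState n) * (zeros x : ℝ)
            - tlTrans m w t ((x, Function.update x i true) : TLState n) := by ring
      rw [show ((zeros (Function.update x i true) : ℝ)) = (zeros x : ℝ) - 1 by linarith, hE]
    · rw [if_neg hu, sub_zero]
      by_cases hP : tlTrans m w t u = 0
      · rw [hP, zero_mul, zero_mul]
      · have hsucc := aux_tlTrans_succ hP
        have hzu : zeros u.2 ≤ zeros x := by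
          rcases hsucc with rfl | ⟨y, hacc, rfl⟩
          · exact le_rfl
          · exact aux_zeros_le_zeros ((aux_accept_iff ht1 ht2).mp hacc)
        exact mul_le_mul_of_nonneg_left (by exact_mod_cast hzu)
          (aux_tlTrans_nonneg m hm0 w t u)
  have hsum1 : ∑ u : TLState n, tlTrans m w t u * (zeros u.2 : ℝ)
      ≤ (∑ u : TLState n, tlTrans m w t u * (zeros x : ℝ))
        - ∑ u : TLState n, (if u ∈ S then tlTrans m w t u else 0) := by
    rw [← Finset.sum_sub_distrib]
    exact Finset.sum_le_sum fun u _ => hptw u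
  have hrow : ∑ u : TLState n, tlTrans m w t u * (zeros x : ℝ) = (zeros x : ℝ) := by
    rw [← Finset.sum_mul, aux_tlTrans_rowsum m hm1 w t, one_mul]
  have hsolo_sum : (zeros x : ℝ) * (1/(eu*(n:ℝ)))
      ≤ ∑ u : TLState n, (if u ∈ S then tlTrans m w t u else 0) := by
    have h1 : ∑ u : TLState n, (if u ∈ S then tlTrans m w t u else 0)
        = ∑ u ∈ S, tlTrans m w t u := by
      rw [Finset.sum_ite_mem, Finset.univ_inter]
    rw [h1, hS, Finset.sum_image hinj]
    have h2 : ∀ i ∈ Z, 1/(eu*(n:ℝ))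
        ≤ tlTrans m w t ((x, Function.update x i true) : TLState n) := by
      intro i hiZ
      have hif : x i = false := by simpa [hZ] using hiZ
      have hacc : fW w t.1 t.2 ≤ fW w t.2 (Function.update x i true) := by
        apply (aux_accept_iff ht1 ht2).mpr
        rw [show t.2 = x from rfl, aux_ones_update hif]
        omega
      exact (hsolo x i hif).trans (aux_tlTrans_single m hm0 w t (Function.update x i true) hacc)
    calc (zeros x : ℝ) * (1/(eu*(n:ℝ))) = ∑ _i ∈ Z, 1/(eu*(n:ℝ)) := by
          rw [Finset.sum_const, nsmul_eq_mul, hzK]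
    _ ≤ ∑ i ∈ Z, tlTrans m w t ((x, Function.update x i true) : TLState n) :=
          Finset.sum_le_sum h2
  have : (1 - 1/(eu*(n:ℝ))) * (zeros x : ℝ)
      = (zeros x : ℝ) - (zeros x : ℝ) * (1/(eu*(n:ℝ))) := by ring
  rw [this]
  linarith

/-- From an `EventII` state, every successor is again an `EventII` state. -/
lemma aux_absorb (hn : 0 < n) (m : BitStr n → BitStr n → ℝ) (w : ℤ)
    {s u : TLState n} (hs1 : firstBit s.1 = true) (hs2 : s.2 = allOnes n)
    (hPu : tlTrans m w s u ≠ 0) : EventII u := by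
  have hfb2 : firstBit s.2 = true := by
    rw [aux_firstBit hn, hs2]
    rfl
  rcases aux_tlTrans_succ hPu with rfl | ⟨y, hacc, rfl⟩
  · exact ⟨hs1, hs2⟩
  · have hones : ones s.2 ≤ ones y := (aux_accept_iff hs1 hfb2).mp hacc
    rw [hs2, aux_ones_allOnes] at hones
    have hzy : zeros y = 0 := by
      have h1 := aux_ones_add_zeros y
      omega
    exact ⟨hfb2, aux_zeros_eq_zero hzy⟩

end Aux7
section Aux8
open Finset

lemma aux_n2 {c : ℝ} (hc0 : 0 < c) (hc2 : c < 1/2) :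
    1 - 1/(2:ℝ)^(1-2*c) - ((2:ℝ)-1)*Real.exp (-(2:ℝ)^c/eu) ≤ 0 := by
  set t : ℝ := (2:ℝ)^c with ht
  have ht1 : (1:ℝ) ≤ t := Real.one_le_rpow (by norm_num) hc0.le
  have htsq : t^2 = (2:ℝ)^(2*c) := by
    rw [ht, ← Real.rpow_natCast ((2:ℝ)^c) 2, ← Real.rpow_mul (by norm_num)]
    congr 1
    push_cast
    ring
  have hp : (0:ℝ) < (2:ℝ)^(1-2*c) := Real.rpow_pos_of_pos (by norm_num) _
  have hpow : (2:ℝ)^(1-2*c) * t^2 = 2 := by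
    rw [htsq, ← Real.rpow_add (by norm_num)]
    norm_num
  have hdiv : 1/(2:ℝ)^(1-2*c) = t^2/2 := by
    rw [div_eq_div_iff hp.ne' (by norm_num : (2:ℝ) ≠ 0), one_mul]
    linarith [hpow]
  have hexp : 1 - t/eu ≤ Real.exp (-(t/eu)) := by
    have := Real.add_one_le_exp (-(t/eu))
    linarith
  have harg : -(2:ℝ)^c/eu = -(t/eu) := by rw [ht]; ring
  rw [hdiv, harg]
  have h2 : t/eu ≤ t^2/2 := by
    have heu := aux_eu_ge_two
    have heup := aux_eu_pos
    rw [div_le_div_iff₀ heup (by norm_num)]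
    nlinarith
  nlinarith

lemma aux_na {n k : ℕ} {c : ℝ} (hn3 : 3 ≤ n) (hc0 : 0 < c)
    (hkc : (k:ℝ) < (n:ℝ)^c) :
    (k:ℝ) * ((⌊(n:ℝ)^(1+c)⌋₊ : ℝ) * (1/(n:ℝ)^2)) ≤ 1/(n:ℝ)^(1-2*c) := by
  set N : ℝ := (n:ℝ) with hN
  have hNpos : (0:ℝ) < N := by
    rw [hN]
    exact_mod_cast Nat.lt_of_lt_of_le (by norm_num) hn3
  have hT : ((⌊N^(1+c)⌋₊ : ℕ) : ℝ) ≤ N^(1+c) := Nat.floor_le (Real.rpow_nonneg hNpos.le _)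
  have hkT : (k:ℝ) * ((⌊N^(1+c)⌋₊ : ℕ) : ℝ) ≤ N^c * N^(1+c) :=
    mul_le_mul hkc.le hT (Nat.cast_nonneg _) (Real.rpow_nonneg hNpos.le _)
  have hEq : N^c * N^(1+c) = N^(1+2*c) := by
    rw [← Real.rpow_add hNpos]
    congr 1
    ring
  have h1 : (0:ℝ) < N^(1-2*c) := Real.rpow_pos_of_pos hNpos _
  have h2 : (0:ℝ) < N^2 := by positivity
  have hprod : N^(1-2*c) * N^(1+2*c) = N^2 := by
    rw [← Real.rpow_add hNpos, ← Real.rpow_natCast N 2]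
    congr 1
    push_cast
    ring
  have hkey : 1/N^(1-2*c) = N^(1+2*c) / N^2 := by
    rw [div_eq_div_iff h1.ne' h2.ne', one_mul, mul_comm, hprod]
  rw [hkey]
  have h3 : (k:ℝ) * (((⌊N^(1+c)⌋₊ : ℕ) : ℝ) * (1/N^2))
      = ((k:ℝ) * ((⌊N^(1+c)⌋₊ : ℕ) : ℝ)) * (1/N^2) := by ring
  have h4 : N^(1+2*c)/N^2 = N^(1+2*c) * (1/N^2) := by ring
  rw [h3, h4]
  exact mul_le_mul_of_nonneg_right (hkT.trans_eq hEq) (by positivity)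

lemma aux_nb {n k : ℕ} {c : ℝ} (hn3 : 3 ≤ n) (hc0 : 0 < c) (hc2 : c < 1/2)
    (hk1 : 1 ≤ k) (hkc : (k:ℝ) < (n:ℝ)^c) :
    (k:ℝ) * (1 - 1/(eu*(n:ℝ)))^(⌊(n:ℝ)^(1+c)⌋₊ : ℕ)
      ≤ ((n:ℝ)-1) * Real.exp (-(n:ℝ)^c/eu) := by
  set N : ℝ := (n:ℝ) with hN
  have hN3 : (3:ℝ) ≤ N := by rw [hN]; exact_mod_cast hn3
  have hNpos : (0:ℝ) < N := by linarith
  have hN1 : (1:ℝ) ≤ N := by linarith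
  have heu2 := aux_eu_ge_two
  have heup := aux_eu_pos
  have heuN : (0:ℝ) < eu*N := by positivity
  have heuN6 : (6:ℝ) ≤ eu*N := by nlinarith
  set T : ℕ := ⌊N^(1+c)⌋₊ with hTdef
  set q : ℝ := 1 - 1/(eu*N) with hq
  have hq0 : (0:ℝ) ≤ q := by
    rw [hq]
    have : 1/(eu*N) ≤ 1/6 := by
      apply one_div_le_one_div_of_le (by norm_num) heuN6
    linarith
  have hq1 : q ≤ Real.exp (-(1/(eu*N))) := by
    rw [hq]
    have := Real.add_one_le_exp (-(1/(eu*N)))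
    linarith
  have hstep1 : q^T ≤ Real.exp ((T:ℝ) * -(1/(eu*N))) := by
    calc q^T ≤ (Real.exp (-(1/(eu*N))))^T := pow_le_pow_left₀ hq0 hq1 T
    _ = Real.exp ((T:ℝ) * -(1/(eu*N))) := (Real.exp_nat_mul _ T).symm
  have hTlb : N^(1+c) - 1 ≤ (T:ℝ) := by
    have := Nat.lt_floor_add_one (N^(1+c))
    rw [hTdef]
    linarith
  have hNc : N^(1+c) = N * N^c := by
    rw [Real.rpow_add hNpos, Real.rpow_one]
  have harg : (T:ℝ) * -(1/(eu*N)) ≤ -(N^c/eu) + 1/(eu*N) := by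
    have hTlb' : N * N^c - 1 ≤ (T:ℝ) := by rw [hNc] at hTlb; linarith
    have hdd : (N * N^c - 1)/(eu*N) ≤ (T:ℝ)/(eu*N) := by gcongr
    have hsplit : (N * N^c - 1)/(eu*N) = N^c/eu - 1/(eu*N) := by
      field_simp
    have hTq : (T:ℝ) * -(1/(eu*N)) = -((T:ℝ)/(eu*N)) := by ring
    rw [hTq]
    linarith [hdd, hsplit]
  have hstep2 : Real.exp ((T:ℝ) * -(1/(eu*N))) ≤ Real.exp (-(N^c/eu)) * 2 := by
    have hexp2 : Real.exp (1/(eu*N)) ≤ 2 := by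
      have hlog : (1:ℝ)/(eu*N) ≤ Real.log 2 := by
        have h6 : (1:ℝ)/(eu*N) ≤ 1/6 := one_div_le_one_div_of_le (by norm_num) heuN6
        have := Real.log_two_gt_d9
        linarith
      calc Real.exp (1/(eu*N)) ≤ Real.exp (Real.log 2) := Real.exp_le_exp.mpr hlog
      _ = 2 := Real.exp_log (by norm_num)
    calc Real.exp ((T:ℝ) * -(1/(eu*N)))
        ≤ Real.exp (-(N^c/eu) + 1/(eu*N)) := Real.exp_le_exp.mpr harg
    _ = Real.exp (-(N^c/eu)) * Real.exp (1/(eu*N)) := Real.exp_add _ _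
    _ ≤ Real.exp (-(N^c/eu)) * 2 := mul_le_mul_of_nonneg_left hexp2 (Real.exp_pos _).le
  have h2k : 2*(k:ℝ) ≤ N - 1 := by
    rcases Nat.lt_or_ge k 2 with hk2 | hk2
    · have hkeq : k = 1 := by omega
      have hkk : (k:ℝ) = 1 := by rw [hkeq]; norm_num
      rw [hkk]
      linarith
    · have hNc12 : N^c ≤ N^(1/2 : ℝ) := Real.rpow_le_rpow_of_exponent_le hN1 (by linarith)
      have hsq : N^(1/2:ℝ) * N^(1/2:ℝ) = N := by
        rw [← Real.rpow_add hNpos]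
        norm_num
      have hkk : (k:ℝ) * (k:ℝ) < N := by
        nlinarith [Real.rpow_nonneg hNpos.le (1/2 : ℝ), Nat.cast_nonneg (α := ℝ) k]
      have hkkn : k*k < n := by
        have : ((k*k : ℕ):ℝ) < N := by push_cast; exact hkk
        rw [hN] at this
        exact_mod_cast this
      have h2kk : 2*k ≤ k*k := Nat.mul_le_mul_right k hk2
      have hfin : 2*k ≤ n - 1 := by omega
      have hcast : ((2*k : ℕ):ℝ) ≤ ((n-1:ℕ):ℝ) := by exact_mod_cast hfin
      push_cast [Nat.cast_sub (by omega : 1 ≤ n)] at hcast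
      linarith [hcast]
  calc (k:ℝ) * q^T
      ≤ (k:ℝ) * (Real.exp (-(N^c/eu)) * 2) :=
        mul_le_mul_of_nonneg_left (hstep1.trans hstep2) (Nat.cast_nonneg k)
  _ = 2*(k:ℝ) * Real.exp (-(N^c/eu)) := by ring
  _ ≤ (N-1) * Real.exp (-(N^c/eu)) := mul_le_mul_of_nonneg_right h2k (Real.exp_pos _).le
  _ = (N-1) * Real.exp (-N^c/eu) := by rw [neg_div]

end Aux8
section Aux9
open Finset

lemma aux_master (n : ℕ) (hn : 1 ≤ n) (c : ℝ) (hc0 : 0 < c) (hc2 : c < 1/2)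
    (w : ℤ) (s : TLState n) (hzeros : (zeros s.2 : ℝ) < (n : ℝ) ^ c)
    (h1 : firstBit s.1 = true) (h2 : firstBit s.2 = true)
    (m : BitStr n → BitStr n → ℝ)
    (hm0 : ∀ x y, 0 ≤ m x y) (hm1 : ∀ x, ∑ y : BitStr n, m x y = 1)
    (hsolo : ∀ (x : BitStr n) (i : Fin n), x i = false →
      1/(eu*(n:ℝ)) ≤ m x (Function.update x i true))
    (hbad : ∀ (x : BitStr n) (i j : Fin n), i ≠ j →
      ∑ y : BitStr n, (if y i ≠ x i ∧ y j ≠ x j then m x y else 0) ≤ 1 / (n:ℝ)^2) :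
    hitProbLater (tlTrans m w) (EventII (n := n)) s ≥
      1 - 1 / (n : ℝ) ^ (1 - 2 * c) - ((n : ℝ) - 1) * Real.exp (-(n : ℝ) ^ c / eu) := by
  classical
  have hn0 : 0 < n := hn
  set P : TLState n → TLState n → ℝ := tlTrans m w with hPdef
  have hP0 : ∀ a b, 0 ≤ P a b := fun a b => aux_tlTrans_nonneg m hm0 w a b
  have hP1 : ∀ a, ∑ b : TLState n, P a b = 1 := fun a => aux_tlTrans_rowsum m hm1 w a
  set g : ℕ → ℝ := fun T => ∑ u : TLState n, P s u * hitWithin P EventII T u with hg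
  have hgle1 : ∀ T, g T ≤ 1 := by
    intro T
    calc g T ≤ ∑ u : TLState n, P s u * 1 := Finset.sum_le_sum fun u _ =>
          mul_le_mul_of_nonneg_left (aux_hitWithin_le_one P hP0 hP1 _ T u) (hP0 s u)
    _ = 1 := by
          simp only [mul_one]
          exact hP1 s
  have hbdd : BddAbove (Set.range g) := by
    refine ⟨1, ?_⟩
    rintro y ⟨T, rfl⟩
    exact hgle1 T
  have hlater : ∀ T, g T ≤ hitProbLater P EventII s := fun T => le_ciSup hbdd T
  have hRHSle1 : 1 - 1/(n:ℝ)^(1-2*c) - ((n:ℝ)-1)*Real.exp (-(n:ℝ)^c/eu) ≤ 1 := by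
    have e1 : (0:ℝ) ≤ 1/(n:ℝ)^(1-2*c) := by positivity
    have e2 : (0:ℝ) ≤ ((n:ℝ)-1)*Real.exp (-(n:ℝ)^c/eu) := by
      apply mul_nonneg _ (Real.exp_pos _).le
      have : (1:ℝ) ≤ n := by exact_mod_cast hn
      linarith
    linarith
  rcases Nat.eq_zero_or_pos (zeros s.2) with hk0 | hk1
  · -- current solution is already the all-ones string
    have hall : s.2 = allOnes n := aux_zeros_eq_zero hk0
    have hg0 : g 0 = 1 := by
      show ∑ u : TLState n, P s u * hitWithin P EventII 0 u = 1
      have hterm : ∀ u : TLState n, P s u * hitWithin P EventII 0 u = P s u := by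
        intro u
        by_cases hPu : P s u = 0
        · rw [hPu, zero_mul]
        · rw [aux_hitWithin_of_event P EventII (aux_absorb hn0 m w h1 hall hPu) 0, mul_one]
      rw [Finset.sum_congr rfl (fun u _ => hterm u)]
      exact hP1 s
    have hl0 := hlater 0
    rw [hg0] at hl0
    linarith [hRHSle1, hl0]
  · have hn2 : 2 ≤ n := by
      by_contra hcon
      have hne : n = 1 := by omega
      subst hne
      rw [Nat.cast_one, Real.one_rpow] at hzeros
      have : (1:ℝ) ≤ (zeros s.2 : ℝ) := by exact_mod_cast hk1
      linarith
    rcases Nat.lt_or_ge n 3 with hn2' | hn3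
    · -- n = 2 : the bound is trivial
      have hne : n = 2 := by omega
      subst hne
      have hRHS0 := aux_n2 hc0 hc2
      have hg00 : 0 ≤ g 0 := Finset.sum_nonneg fun u _ =>
        mul_nonneg (hP0 s u) (aux_hitWithin_nonneg P hP0 _ 0 u)
      have hl0 := hlater 0
      have hcast : ((2:ℕ):ℝ) = (2:ℝ) := by norm_num
      rw [ge_iff_le, hcast]
      linarith [hRHS0, hg00, hl0]
    · -- main case : n ≥ 3
      set GP : TLState n → Prop :=
        fun u => firstBit u.1 = true ∧ firstBit u.2 = true ∧ zeros u.2 ≤ zeros s.2 with hGP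
      have heup := aux_eu_pos
      have hNpos : (0:ℝ) < n := by exact_mod_cast hn0
      have hr0 : (0:ℝ) ≤ 1/(eu*(n:ℝ)) := by positivity
      have hr1 : 1/(eu*(n:ℝ)) ≤ 1 := by
        rw [div_le_one (by positivity)]
        have hn1R : (1:ℝ) ≤ (n:ℝ) := by exact_mod_cast hn
        nlinarith [aux_eu_ge_two]
      have hEv : ∀ t, GP t → ¬ EventII t → 1 ≤ zeros t.2 := by
        intro t hGPt hE
        rcases Nat.eq_zero_or_pos (zeros t.2) with h0 | h1'
        · exact absurd ⟨hGPt.1, aux_zeros_eq_zero h0⟩ hE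
        · exact h1'
      have hite : ∀ (p : Prop) (hd1 hd2 : Decidable p) (a b : ℝ),
          @ite ℝ p hd1 a b = @ite ℝ p hd2 a b := by
        intro p hd1 hd2 a b
        congr
      have H1 : ∀ t, GP t → ¬ EventII t →
          ∑ u : TLState n, (@ite ℝ (GP u) (Classical.propDecidable (GP u)) 0 (P t u))
            ≤ (1/(n:ℝ)^2) * (zeros t.2 : ℝ) := by
        intro t hGPt hE
        have hh := aux_H1 hn0 m hm0 hbad w (zeros s.2) t hGPt.1 hGPt.2.1 hGPt.2.2
        refine le_trans (le_of_eq ?_) hh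
        apply Finset.sum_congr rfl
        intro u _
        apply hite
      have H2 : ∀ t, GP t → ¬ EventII t →
          ∑ u : TLState n, P t u * (zeros u.2 : ℝ)
            ≤ (1 - 1/(eu*(n:ℝ))) * (zeros t.2 : ℝ) :=
        fun t hGPt _ => aux_H2 hn0 m hm0 hm1 hsolo w t hGPt.1 hGPt.2.1
      have hA := aux_lemmaA P hP0 hP1 (1/(n:ℝ)^2) (1/(eu*(n:ℝ)))
        (by positivity) hr0 hr1 GP hEv H1 H2
      set T : ℕ := ⌊(n:ℝ)^(1+c)⌋₊ with hT
      have hT1 : 1 ≤ T := by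
        rw [hT]
        apply Nat.le_floor
        rw [Nat.cast_one]
        exact Real.one_le_rpow (by exact_mod_cast hn) (by linarith)
      have hGPs : GP s := ⟨h1, h2, le_rfl⟩
      have hmain := hA T s hGPs
      have hNE : ¬ EventII s := by
        intro hE
        have hz0 : zeros s.2 = 0 := by
          rw [hE.2]
          have := aux_ones_add_zeros (allOnes n)
          rw [aux_ones_allOnes] at this
          omega
        omega
      have hTT : T = (T-1) + 1 := by omega
      have hwithin : g (T-1) = hitWithin P EventII T s := by
        conv_rhs => rw [hTT]
        rw [hitWithin, if_neg hNE]
      have hle := hlater (T-1)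
      rw [hwithin] at hle
      have hna := aux_na (n := n) (k := zeros s.2) hn3 hc0 hzeros
      have hnb := aux_nb (n := n) (k := zeros s.2) hn3 hc0 hc2 hk1 hzeros
      rw [← hT] at hna hnb
      have hexpand : (zeros s.2 : ℝ) * ((T:ℝ) * (1/(n:ℝ)^2) + (1 - 1/(eu*(n:ℝ)))^T)
          = (zeros s.2 : ℝ) * ((T:ℝ) * (1/(n:ℝ)^2))
            + (zeros s.2 : ℝ) * (1 - 1/(eu*(n:ℝ)))^T := by ring
      rw [hexpand] at hmain
      linarith [hna, hnb, hmain, hle]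

end Aux9
/-- Let `c ∈ (0, 1/2)` and `-n ≤ w ≤ -1`. If the
time-linkage RLS or (1+1) EA on `f_w` is at a non-optimal state `(x', x)` with
fewer than `n^c` zero-bits in the current solution and with first bit pattern
`(1, 1)` (as is the situation when it first arrives below `n^c` zeros without
having reached the global optimum), then with probability at least
`1 - 1/n^{1-2c} - (n-1)·e^{-n^c/e}`, Event II occurs at some later time. -/
theorem stmt10 (n : ℕ) (hn : 1 ≤ n) (c : ℝ) (hc : c ∈ Set.Ioo (0 : ℝ) (1 / 2))
    (w : ℤ) (hw1 : -(n : ℤ) ≤ w) (hw2 : w ≤ -1)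
    (s : TLState n) (hzeros : (zeros s.2 : ℝ) < (n : ℝ) ^ c)
    (hnopt : ¬ OptNeg s)
    (h1 : firstBit s.1 = true) (h2 : firstBit s.2 = true) :
    ∀ P ∈ ({transEA (n := n) w, transRLS (n := n) w} :
        Set (TLState n → TLState n → ℝ)),
      hitProbLater P (EventII (n := n)) s ≥
        1 - 1 / (n : ℝ) ^ (1 - 2 * c) -
          ((n : ℝ) - 1) * Real.exp (-(n : ℝ) ^ c / eu) := by
  obtain ⟨hc0, hc2⟩ := hc
  intro P hP
  simp only [Set.mem_insert_iff, Set.mem_singleton_iff] at hP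
  rcases hP with rfl | rfl
  · exact aux_master n hn c hc0 hc2 w s hzeros h1 h2 mutEA
      aux_mutEA_nonneg aux_sum_mutEA
      (fun x i h => aux_mutEA_solo hn x i h)
      (fun x i j hij => aux_mutEA_twoflip_le x i j hij)
  · exact aux_master n hn c hc0 hc2 w s hzeros h1 h2 mutRLS
      aux_mutRLS_nonneg (fun x => aux_sum_mutRLS hn x)
      (fun x i h => aux_mutRLS_solo hn x i h)
      (fun x i j hij => aux_mutRLS_twoflip x i j hij)
end
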